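/- arXiv:1203.3739 — 5 statements merged into one kernel-verified Lean document; each statement's English description precedes it below -/
import Mathlib

section
/- For every real number α with 0 < α < 2, the function z ↦ |z|^{-2-α} · (arg(1+z))² is integrable on ℂ with respect to two-dimensional Lebesgue measure; that is, ∫_ℂ |z|^{-2-α} |φ(1+z)|² dz < ∞, where φ(w) = arg(w) denotes the principal argument of a nonzero complex number w, valued in (-π, π]. -/
open MeasureTheory Complex Set Metric

private lemma arg_sq_le {z : ℂ} (hz : ‖z‖ ≤ 1/2) :
    (Complex.arg (1 + z)) ^ 2 ≤ Real.pi ^ 2 * ‖z‖ ^ 2 := by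
  set w : ℂ := 1 + z with hw
  have hπ := Real.pi_pos
  have habsw : (1:ℝ)/2 ≤ ‖w‖ := by
    have h1 : ‖(w + -z)‖ ≤ ‖w‖ + ‖(-z)‖ :=
      norm_add_le w (-z)
    have h2 : w + -z = 1 := by rw [hw]; ring
    rw [h2, norm_one, norm_neg] at h1
    linarith
  have hre : 0 ≤ w.re := by
    have h2 : |z.re| ≤ ‖z‖ := Complex.abs_re_le_norm z
    have h3 : w.re = 1 + z.re := by simp [hw]
    rw [h3]
    have := abs_le.1 h2
    linarith
  have harg : |Complex.arg w| ≤ Real.pi / 2 := Complex.abs_arg_le_pi_div_two_iff.2 hre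
  have h1 : 2 / Real.pi * |Complex.arg w| ≤ |Real.sin (Complex.arg w)| :=
    Real.mul_abs_le_abs_sin harg
  have h2 : |Real.sin (Complex.arg w)| ≤ 2 * ‖z‖ := by
    rw [Complex.sin_arg, abs_div, _root_.abs_of_nonneg (norm_nonneg w)]
    rw [div_le_iff₀ (by linarith : (0:ℝ) < ‖w‖)]
    have him : |w.im| = |z.im| := by simp [hw]
    have h3 : |z.im| ≤ ‖z‖ := Complex.abs_im_le_norm z
    have h4 : (1:ℝ) ≤ 2 * ‖w‖ := by linarith
    calc |w.im| = |z.im| := him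
      _ = |z.im| * 1 := (mul_one _).symm
      _ ≤ ‖z‖ * (2 * ‖w‖) :=
          mul_le_mul h3 h4 zero_le_one (norm_nonneg z)
      _ = 2 * ‖z‖ * ‖w‖ := by ring
  have h5 : |Complex.arg w| ≤ Real.pi * ‖z‖ := by
    have h6 : 2 / Real.pi * |Complex.arg w| ≤ 2 * ‖z‖ := h1.trans h2
    calc |Complex.arg w| = Real.pi / 2 * (2 / Real.pi * |Complex.arg w|) := by
          field_simp
      _ ≤ Real.pi / 2 * (2 * ‖z‖) :=
          mul_le_mul_of_nonneg_left h6 (by positivity)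
      _ = Real.pi * ‖z‖ := by ring
  calc (Complex.arg w) ^ 2 = |Complex.arg w| ^ 2 := (_root_.sq_abs _).symm
    _ ≤ (Real.pi * ‖z‖) ^ 2 :=
        pow_le_pow_left₀ (abs_nonneg _) h5 2
    _ = Real.pi ^ 2 * ‖z‖ ^ 2 := by ring

private lemma integrableOn_ball_rpow_neg {α : ℝ} (hα : 0 < α) (hα2 : α < 2) :
    IntegrableOn (fun z : ℂ => ‖z‖ ^ (-α)) (Metric.ball 0 (1/2)) volume := by
  have hmeas : Measurable fun z : ℂ => ‖z‖ ^ (-α) :=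
    continuous_norm.measurable.pow_const _
  set μ := volume.restrict (Metric.ball (0:ℂ) (1/2)) with hμ
  refine ⟨hmeas.aestronglyMeasurable, ?_⟩
  have hnn : ∀ a : ℂ, 0 ≤ ‖a‖ ^ (-α) := fun a =>
    Real.rpow_nonneg (norm_nonneg a) _
  have heq : (∫⁻ a, ‖‖a‖ ^ (-α)‖ₑ ∂μ)
      = ∫⁻ a, ENNReal.ofReal (‖a‖ ^ (-α)) ∂μ :=
    lintegral_enorm_of_nonneg hnn
  rw [HasFiniteIntegral, heq,
    lintegral_eq_lintegral_meas_le μ (Filter.Eventually.of_forall hnn) hmeas.aemeasurable]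
  have hsub : ∀ t : ℝ, 0 < t → {a : ℂ | t ≤ ‖a‖ ^ (-α)}
      ⊆ Metric.closedBall 0 (t ^ (-α⁻¹)) := by
    intro t ht a ha
    simp only [mem_setOf_eq] at ha
    rcases eq_or_ne a 0 with rfl | ha0
    · exfalso
      rw [norm_zero, Real.zero_rpow (neg_ne_zero.2 hα.ne')] at ha
      linarith
    · have hpos : 0 < ‖a‖ := norm_pos_iff.2 ha0
      have key : ‖a‖ ≤ t ^ (-α⁻¹) := by
        have h1 : (‖a‖ ^ (-α)) ^ (-α⁻¹) ≤ t ^ (-α⁻¹) :=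
          Real.rpow_le_rpow_of_nonpos ht ha (neg_nonpos.2 (inv_nonneg.2 hα.le))
        have h2 : (‖a‖ ^ (-α)) ^ (-α⁻¹) = ‖a‖ := by
          rw [← Real.rpow_mul hpos.le]
          rw [show -α * -α⁻¹ = α * α⁻¹ by ring, mul_inv_cancel₀ hα.ne', Real.rpow_one]
        rwa [h2] at h1
      simpa [Metric.mem_closedBall, Complex.dist_eq] using key
  calc ∫⁻ t in Ioi (0:ℝ), μ {a : ℂ | t ≤ ‖a‖ ^ (-α)}
      ≤ ∫⁻ t in Ioc (0:ℝ) 1 ∪ Ioi 1, μ {a : ℂ | t ≤ ‖a‖ ^ (-α)} :=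
        lintegral_mono_set Ioi_subset_Ioc_union_Ioi
    _ ≤ (∫⁻ t in Ioc (0:ℝ) 1, μ {a : ℂ | t ≤ ‖a‖ ^ (-α)})
        + ∫⁻ t in Ioi (1:ℝ), μ {a : ℂ | t ≤ ‖a‖ ^ (-α)} :=
        lintegral_union_le _ _ _
    _ < ⊤ := by
        refine ENNReal.add_lt_top.2 ⟨?_, ?_⟩
        · calc (∫⁻ t in Ioc (0:ℝ) 1, μ {a : ℂ | t ≤ ‖a‖ ^ (-α)})
              ≤ ∫⁻ _ in Ioc (0:ℝ) 1, volume (Metric.ball (0:ℂ) (1/2)) := by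
                refine lintegral_mono fun t => ?_
                calc μ {a : ℂ | t ≤ ‖a‖ ^ (-α)} ≤ μ univ :=
                      measure_mono (subset_univ _)
                  _ = volume (Metric.ball (0:ℂ) (1/2)) := by
                      rw [hμ, Measure.restrict_apply_univ]
            _ = volume (Metric.ball (0:ℂ) (1/2)) * volume (Ioc (0:ℝ) 1) :=
                setLIntegral_const _ _
            _ < ⊤ := ENNReal.mul_lt_top measure_ball_lt_top measure_Ioc_lt_top
        · have C_lt : volume (Metric.ball (0:ℂ) 1) < ⊤ := measure_ball_lt_top
          calc (∫⁻ t in Ioi (1:ℝ), μ {a : ℂ | t ≤ ‖a‖ ^ (-α)})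
              ≤ ∫⁻ t in Ioi (1:ℝ),
                  ENNReal.ofReal (t ^ (-(2/α))) * volume (Metric.ball (0:ℂ) 1) := by
                refine setLIntegral_mono' measurableSet_Ioi fun t ht => ?_
                have ht1 : (1:ℝ) < t := ht
                have ht0 : (0:ℝ) < t := lt_trans one_pos ht1
                calc μ {a : ℂ | t ≤ ‖a‖ ^ (-α)}
                    ≤ μ (Metric.closedBall 0 (t ^ (-α⁻¹))) :=
                      measure_mono (hsub t ht0)
                  _ ≤ volume (Metric.closedBall (0:ℂ) (t ^ (-α⁻¹))) :=
                      hμ ▸ Measure.restrict_apply_le _ _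
                  _ = ENNReal.ofReal ((t ^ (-α⁻¹)) ^ Module.finrank ℝ ℂ)
                        * volume (Metric.ball (0:ℂ) 1) :=
                      Measure.addHaar_closedBall _ _ (Real.rpow_nonneg ht0.le _)
                  _ = ENNReal.ofReal (t ^ (-(2/α))) * volume (Metric.ball (0:ℂ) 1) := by
                      congr 1
                      rw [Complex.finrank_real_complex, ← Real.rpow_natCast (t ^ (-α⁻¹)) 2,
                        ← Real.rpow_mul ht0.le,
                        show -α⁻¹ * ((2:ℕ):ℝ) = -(2/α) by push_cast; rw [div_eq_mul_inv]; ring]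
            _ = (∫⁻ t in Ioi (1:ℝ), ENNReal.ofReal (t ^ (-(2/α))))
                  * volume (Metric.ball (0:ℂ) 1) :=
                lintegral_mul_const' _ _ C_lt.ne
            _ < ⊤ := by
                refine ENNReal.mul_lt_top ?_ C_lt
                have hexp : -(2/α) < -1 := by
                  rw [neg_lt_neg_iff]
                  rw [lt_div_iff₀ hα]
                  linarith
                exact (integrableOn_Ioi_rpow_of_lt hexp one_pos).setLIntegral_lt_top

/-- For `0 < α < 2`, the function `z ↦ |z|^(-2-α) · (arg(1+z))²` is integrable on `ℂ`
with respect to two-dimensional Lebesgue measure. -/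
theorem stmt1 (α : ℝ) (hα : 0 < α) (hα2 : α < 2) :
    Integrable (fun z : ℂ => ‖z‖ ^ (-2 - α) * (Complex.arg (1 + z)) ^ 2)
      volume := by
  have hπ := Real.pi_pos
  have hmeas : Measurable fun z : ℂ =>
      ‖z‖ ^ (-2 - α) * (Complex.arg (1 + z)) ^ 2 := by
    refine (continuous_norm.measurable.pow_const _).mul ?_
    exact ((Complex.measurable_arg.comp (measurable_const.add measurable_id)).pow_const 2)
  have hnn : ∀ z : ℂ, 0 ≤ ‖z‖ ^ (-2 - α) * (Complex.arg (1 + z)) ^ 2 := fun z =>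
    mul_nonneg (Real.rpow_nonneg (norm_nonneg z) _) (sq_nonneg _)
  rw [← integrableOn_univ, ← Set.union_compl_self (Metric.ball (0:ℂ) (1/2))]
  refine IntegrableOn.union ?_ ?_
  · -- near zero
    refine Integrable.mono'
      ((integrableOn_ball_rpow_neg hα hα2).const_mul (Real.pi ^ 2))
      (hmeas.aestronglyMeasurable.restrict) ?_
    rw [ae_restrict_iff' measurableSet_ball]
    refine Filter.Eventually.of_forall fun z hz => ?_
    have hz' : ‖z‖ ≤ 1/2 := by
      rw [Metric.mem_ball, Complex.dist_eq, sub_zero] at hz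
      exact hz.le
    rw [Real.norm_eq_abs, _root_.abs_of_nonneg (hnn z)]
    have harg := arg_sq_le hz'
    calc ‖z‖ ^ (-2 - α) * (Complex.arg (1 + z)) ^ 2
        ≤ ‖z‖ ^ (-2 - α) * (Real.pi ^ 2 * ‖z‖ ^ 2) :=
          mul_le_mul_of_nonneg_left harg (Real.rpow_nonneg (norm_nonneg z) _)
      _ = Real.pi ^ 2 * (‖z‖ ^ (-2 - α) * ‖z‖ ^ ((2:ℕ):ℝ)) := by
          rw [Real.rpow_natCast]
          push_cast
          ring
      _ ≤ Real.pi ^ 2 * ‖z‖ ^ (-α) := by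
          rcases eq_or_ne z 0 with rfl | hz0
          · simp [Real.zero_rpow (show -2 - α ≠ 0 by intro h; linarith),
              Real.zero_rpow (neg_ne_zero.2 hα.ne')]
          · rw [← Real.rpow_add (norm_pos_iff.2 hz0),
              show -2 - α + ((2:ℕ):ℝ) = -α by push_cast; ring]
  · -- tail
    have hfin : (Module.finrank ℝ ℂ : ℝ) < 2 + α := by
      rw [Complex.finrank_real_complex]; norm_num; linarith
    refine Integrable.mono'
      (((integrable_one_add_norm (μ := (volume : Measure ℂ)) hfin).const_mul
        (Real.pi ^ 2 * 3 ^ (2+α))).integrableOn)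
      (hmeas.aestronglyMeasurable.restrict) ?_
    rw [ae_restrict_iff' measurableSet_ball.compl]
    refine Filter.Eventually.of_forall fun z hz => ?_
    have hz' : (1:ℝ)/2 ≤ ‖z‖ := by
      simp only [mem_compl_iff, Metric.mem_ball, Complex.dist_eq, sub_zero, not_lt] at hz
      exact hz
    have hzpos : 0 < ‖z‖ := lt_of_lt_of_le (by norm_num) hz'
    rw [Real.norm_eq_abs, _root_.abs_of_nonneg (hnn z)]
    have harg2 : (Complex.arg (1 + z)) ^ 2 ≤ Real.pi ^ 2 := by
      calc (Complex.arg (1 + z)) ^ 2 = |Complex.arg (1 + z)| ^ 2 := (_root_.sq_abs _).symm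
        _ ≤ Real.pi ^ 2 := pow_le_pow_left₀ (abs_nonneg _) (Complex.abs_arg_le_pi _) 2
    have hbase : 1 + ‖z‖ ≤ 3 * ‖z‖ := by
      linarith
    have hA : (1 + ‖z‖) ^ (2+α) ≤ 3 ^ (2+α) * ‖z‖ ^ (2+α) := by
      calc (1 + ‖z‖) ^ (2+α) ≤ (3 * ‖z‖) ^ (2+α) :=
            Real.rpow_le_rpow (by positivity) hbase (by linarith)
        _ = 3 ^ (2+α) * ‖z‖ ^ (2+α) :=
            Real.mul_rpow (by norm_num) (norm_nonneg z)
    have hrpow : ‖z‖ ^ (-2 - α) ≤ 3 ^ (2+α) * (1 + ‖z‖) ^ (-(2+α)) := by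
      have hApos : (0:ℝ) < ‖z‖ ^ (2+α) := Real.rpow_pos_of_pos hzpos _
      have hBpos : (0:ℝ) < (1 + ‖z‖) ^ (2+α) :=
        Real.rpow_pos_of_pos (by positivity) _
      have h3pos : (0:ℝ) < (3:ℝ) ^ (2+α) := Real.rpow_pos_of_pos (by norm_num) _
      rw [show (-2 - α) = -(2+α) by ring, Real.rpow_neg (norm_nonneg z),
        Real.rpow_neg (by positivity : (0:ℝ) ≤ 1 + ‖z‖)]
      have hquot : (1 + ‖z‖) ^ (2+α) / 3 ^ (2+α) ≤ ‖z‖ ^ (2+α) := by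
        rw [div_le_iff₀ h3pos]; linarith [hA]
      calc (‖z‖ ^ (2+α))⁻¹
          ≤ ((1 + ‖z‖) ^ (2+α) / 3 ^ (2+α))⁻¹ :=
            inv_anti₀ (div_pos hBpos h3pos) hquot
        _ = 3 ^ (2+α) * ((1 + ‖z‖) ^ (2+α))⁻¹ := by
            rw [inv_div, div_eq_mul_inv]
    calc ‖z‖ ^ (-2 - α) * (Complex.arg (1 + z)) ^ 2
        ≤ ‖z‖ ^ (-2 - α) * Real.pi ^ 2 :=
          mul_le_mul_of_nonneg_left harg2 (Real.rpow_nonneg (norm_nonneg z) _)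
      _ ≤ (3 ^ (2+α) * (1 + ‖z‖) ^ (-(2+α))) * Real.pi ^ 2 :=
          mul_le_mul_of_nonneg_right hrpow (by positivity)
      _ = Real.pi ^ 2 * 3 ^ (2+α) * (1 + ‖z‖) ^ (-(2+α)) := by ring
end

section
/- Let α be a real number with 0 < α < 2 and let φ be a real number with 0 < φ < π. Then ∫₀^∞ r · (1 + r² - 2r·cos φ)^{-(1+α/2)} dr = 1/α + cos φ · (sin φ)^{-1-α} · ∫_{-cos φ / sin φ}^{∞} (1 + u²)^{-(1+α/2)} du. (Note that 1 + r² - 2r·cos φ = (r - cos φ)² + sin²φ > 0 for all r when 0 < φ < π, so the integrand is well defined.) -/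
open MeasureTheory Real Set

lemma integral_Ioi_comp_add_right (g : ℝ → ℝ) (a d : ℝ) :
    (∫ x in Set.Ioi a, g (x + d)) = ∫ x in Set.Ioi (a + d), g x := by
  rw [← integral_indicator measurableSet_Ioi, ← integral_indicator measurableSet_Ioi,
    ← integral_add_right_eq_self (Set.indicator (Set.Ioi (a + d)) g) d]
  congr 1
  ext x
  by_cases h : a < x
  · simp [Set.indicator, h, add_lt_add_iff_right]
  · simp [Set.indicator, h, add_lt_add_iff_right]

/-- For `0 < α < 2` and `0 < φ < π`,
`∫₀^∞ r (1 + r² - 2r cos φ)^(-(1+α/2)) dr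
  = 1/α + cos φ · (sin φ)^(-1-α) · ∫_{-cos φ/sin φ}^∞ (1+u²)^(-(1+α/2)) du`. -/
theorem stmt2 (α φ : ℝ) (hα : 0 < α) (hα2 : α < 2) (hφ : 0 < φ) (hφπ : φ < π) :
    ∫ r in Set.Ioi (0 : ℝ), r * (1 + r ^ 2 - 2 * r * Real.cos φ) ^ (-(1 + α / 2)) =
      1 / α + Real.cos φ * Real.sin φ ^ (-1 - α) *
        ∫ u in Set.Ioi (-Real.cos φ / Real.sin φ), (1 + u ^ 2) ^ (-(1 + α / 2)) := by
  set c := Real.cos φ with hc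
  set s := Real.sin φ with hsdef
  have hs : 0 < s := Real.sin_pos_of_pos_of_lt_pi hφ hφπ
  have hsc : s ^ 2 + c ^ 2 = 1 := Real.sin_sq_add_cos_sq φ
  set p : ℝ := -(1 + α / 2) with hp
  set u0 : ℝ := -c / s with hu0
  set g : ℝ → ℝ := fun r => r * ((r - c) ^ 2 + s ^ 2) ^ p with hg
  -- Step A: rewrite integrand
  have hbase : ∀ r : ℝ, 1 + r ^ 2 - 2 * r * c = (r - c) ^ 2 + s ^ 2 := by
    intro r; nlinarith [hsc]
  have stepA : (∫ r in Set.Ioi (0 : ℝ), r * (1 + r ^ 2 - 2 * r * c) ^ p)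
      = ∫ r in Set.Ioi (0 : ℝ), g r := by
    simp_rw [hbase]; rfl
  -- auxiliary derivative / antiderivative
  set G : ℝ → ℝ := fun u => -α⁻¹ * (1 + u ^ 2) ^ (-(α / 2)) with hG
  have hGderiv : ∀ u : ℝ, HasDerivAt G (u * (1 + u ^ 2) ^ p) u := by
    intro u
    have h1 : HasDerivAt (fun u : ℝ => 1 + u ^ 2) (2 * u) u := by
      simpa using ((hasDerivAt_pow 2 u).const_add 1)
    have h2 : HasDerivAt (fun u : ℝ => (1 + u ^ 2) ^ (-(α / 2)))
        ((2 * u) * (-(α / 2)) * (1 + u ^ 2) ^ (-(α / 2) - 1)) u := by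
      exact h1.rpow_const (Or.inl (by positivity))
    have := h2.const_mul (-α⁻¹)
    refine this.congr_deriv ?_
    have hexp : -(α / 2) - 1 = p := by rw [hp]; ring
    rw [← hexp]
    field_simp
  have hGtend : Filter.Tendsto G Filter.atTop (nhds 0) := by
    have hsq : Filter.Tendsto (fun u : ℝ => u ^ 2) Filter.atTop Filter.atTop := by
      simpa [pow_two] using Filter.Tendsto.atTop_mul_atTop₀ Filter.tendsto_id Filter.tendsto_id
    have h1 : Filter.Tendsto (fun u : ℝ => 1 + u ^ 2) Filter.atTop Filter.atTop :=
      Filter.tendsto_atTop_add_const_left _ 1 hsq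
    have h2 : Filter.Tendsto (fun x : ℝ => x ^ (-(α / 2))) Filter.atTop (nhds 0) :=
      tendsto_rpow_neg_atTop (by positivity)
    have h3 := (h2.comp h1).const_mul (-α⁻¹)
    rw [hG]
    simpa [Function.comp, neg_mul] using h3
  -- Integrability of (1+u²)^p
  have hcontp : Continuous (fun u : ℝ => (1 + u ^ 2) ^ p) := by
    apply Continuous.rpow_const (by continuity)
    intro x; left; positivity
  have int2 : Integrable (fun u : ℝ => (1 + u ^ 2) ^ p) := by
    apply integrable_inv_one_add_sq.mono hcontp.aestronglyMeasurable
    filter_upwards with u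
    rw [norm_of_nonneg (by positivity), norm_of_nonneg (by positivity)]
    calc (1 + u ^ 2) ^ p ≤ (1 + u ^ 2) ^ (-1 : ℝ) := by
          apply Real.rpow_le_rpow_of_exponent_le (by nlinarith)
          rw [hp]; nlinarith
      _ = (1 + u ^ 2)⁻¹ := by rw [Real.rpow_neg_one]
  -- Integrability of u * (1+u²)^p on Ioi u0
  have hcont1 : Continuous (fun u : ℝ => u * (1 + u ^ 2) ^ p) := continuous_id.mul hcontp
  have int1 : IntegrableOn (fun u : ℝ => u * (1 + u ^ 2) ^ p) (Set.Ioi u0) := by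
    have ha : IntegrableOn (fun u : ℝ => u * (1 + u ^ 2) ^ p) (Set.Ioc u0 0) :=
      hcont1.integrableOn_Ioc
    have hb : IntegrableOn (fun u : ℝ => u * (1 + u ^ 2) ^ p) (Set.Ioi (0 : ℝ)) := by
      apply integrableOn_Ioi_deriv_of_nonneg
        ((hGderiv 0).continuousAt.continuousWithinAt)
        (fun x _ => hGderiv x) ?_ hGtend
      intro x hx
      have : (0:ℝ) < x := hx
      positivity
    have := ha.union hb
    apply this.mono_set
    intro x hx
    rcases le_or_gt x 0 with h | h
    · exact Or.inl ⟨hx, h⟩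
    · exact Or.inr h
  -- Value of ∫_{u0}^∞ u (1+u²)^p
  have hu0sq : 1 + u0 ^ 2 = s ^ (-2 : ℝ) := by
    have key : s ^ 2 * (1 + u0 ^ 2) = 1 := by
      rw [hu0, div_pow, neg_sq, mul_add, mul_one,
        mul_div_cancel₀ _ (by positivity : (s ^ 2 : ℝ) ≠ 0)]
      exact hsc
    rw [Real.rpow_neg hs.le, show ((2:ℝ):ℝ) = ((2:ℕ):ℝ) by norm_num, Real.rpow_natCast]
    exact (inv_eq_of_mul_eq_one_right key).symm
  have I1val : (∫ u in Set.Ioi u0, u * (1 + u ^ 2) ^ p) = α⁻¹ * s ^ α := by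
    rw [integral_Ioi_of_hasDerivAt_of_tendsto
      ((hGderiv u0).continuousAt.continuousWithinAt) (fun x _ => hGderiv x) int1 hGtend]
    rw [hG]
    simp only [zero_sub, neg_mul, neg_neg]
    rw [hu0sq, ← Real.rpow_mul hs.le, show (-2 : ℝ) * -(α / 2) = α by ring]
  -- substitution
  have sub1 : (∫ u in Set.Ioi u0, g (s * u + c)) = s⁻¹ • ∫ x in Set.Ioi (0 : ℝ), g x := by
    have e1 : (∫ u in Set.Ioi u0, g (s * u + c))
        = ∫ u in Set.Ioi u0, (fun x => g (x + c)) (s * u) := rfl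
    rw [e1, integral_comp_mul_left_Ioi (fun x => g (x + c)) u0 hs]
    have e2 : s * u0 = -c := by rw [hu0]; field_simp
    rw [e2, integral_Ioi_comp_add_right g (-c) c]
    norm_num
  have main : (∫ r in Set.Ioi (0 : ℝ), g r) = s * ∫ u in Set.Ioi u0, g (s * u + c) := by
    rw [sub1, smul_eq_mul, ← mul_assoc, mul_inv_cancel₀ hs.ne', one_mul]
  -- simplify g (s u + c)
  have hgval : ∀ u : ℝ, g (s * u + c)
      = s ^ (-2 - α) * (s * (u * (1 + u ^ 2) ^ p) + c * (1 + u ^ 2) ^ p) := by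
    intro u
    have hb2 : (s * u + c - c) ^ 2 + s ^ 2 = s ^ 2 * (1 + u ^ 2) := by ring
    rw [hg]
    dsimp only
    rw [hb2, Real.mul_rpow (by positivity) (by positivity)]
    have hsp : (s ^ 2 : ℝ) ^ p = s ^ (-2 - α) := by
      rw [← Real.rpow_natCast s 2, ← Real.rpow_mul hs.le]
      congr 1
      rw [hp]; push_cast; ring
    rw [hsp]
    ring
  have split : (∫ u in Set.Ioi u0, g (s * u + c))
      = s ^ (-2 - α) * (s * (∫ u in Set.Ioi u0, u * (1 + u ^ 2) ^ p)
          + c * ∫ u in Set.Ioi u0, (1 + u ^ 2) ^ p) := by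
    simp_rw [hgval]
    rw [integral_const_mul]
    congr 1
    rw [integral_add ((int1.const_mul s)) ((int2.integrableOn.const_mul c)),
      integral_const_mul, integral_const_mul]
  -- assemble
  rw [stepA, main, split, I1val]
  have hpow1 : s * (s ^ (-2 - α) * (s * (α⁻¹ * s ^ α))) = 1 / α := by
    rw [show s * (s ^ (-2 - α) * (s * (α⁻¹ * s ^ α)))
        = α⁻¹ * (s ^ (1:ℝ) * s ^ (-2 - α) * s ^ (1:ℝ) * s ^ α) by
      rw [Real.rpow_one]; ring]
    rw [← Real.rpow_add hs, ← Real.rpow_add hs, ← Real.rpow_add hs,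
      show (1 : ℝ) + (-2 - α) + 1 + α = 0 by ring, Real.rpow_zero, mul_one,
      inv_eq_one_div]
  have hpow2 : s * s ^ (-2 - α) = s ^ (-1 - α) := by
    rw [show s * s ^ (-2 - α) = s ^ (1:ℝ) * s ^ (-2 - α) by rw [Real.rpow_one],
      ← Real.rpow_add hs, show (1 : ℝ) + (-2 - α) = -1 - α by ring]
  calc s * (s ^ (-2 - α) * (s * (α⁻¹ * s ^ α) + c * ∫ u in Set.Ioi u0, (1 + u ^ 2) ^ p))
      = s * (s ^ (-2 - α) * (s * (α⁻¹ * s ^ α)))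
        + (s * s ^ (-2 - α)) * (c * ∫ u in Set.Ioi u0, (1 + u ^ 2) ^ p) := by ring
    _ = 1 / α + c * s ^ (-1 - α) * ∫ u in Set.Ioi u0, (1 + u ^ 2) ^ p := by
        rw [hpow1, hpow2]; ring
end

section
/- Let α be a real number with 0 < α < 2. Then lim_{φ → 0⁺} φ^{1+α} · ∫₀^∞ r · (1 + r² - 2r·cos φ)^{-(1+α/2)} dr = √π · Γ((1+α)/2) / Γ(1+α/2), where Γ denotes the Gamma function. -/
open MeasureTheory Real Set Filter Topology

lemma aux_integrable_q {q : ℝ} (hq : 1/2 < q) :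
    Integrable (fun t : ℝ => (1 + t ^ 2) ^ (-q)) := by
  have h := integrable_rpow_neg_one_add_norm_sq (E := ℝ) (μ := volume) (r := 2*q)
    (by simp; linarith)
  simpa [Real.norm_eq_abs, sq_abs, neg_div, mul_div_assoc] using h

lemma aux_shift (g : ℝ → ℝ) (a d : ℝ) :
    ∫ x in Ioi a, g (x + d) = ∫ x in Ioi (a + d), g x := by
  rw [← integral_indicator measurableSet_Ioi, ← integral_indicator measurableSet_Ioi,
    ← integral_add_right_eq_self (fun x => (Ioi (a + d)).indicator g x) d]
  congr 1; ext x
  simp only [indicator, mem_Ioi]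
  by_cases h : a < x
  · rw [if_pos h, if_pos (by linarith)]
  · rw [if_neg h, if_neg (by intro hh; exact h (by linarith))]

lemma aux_tendsto_Ioi {g : ℝ → ℝ} (hg : Integrable g) :
    Tendsto (fun a : ℝ => ∫ x in Ioi a, g x) atBot (𝓝 (∫ x, g x)) := by
  have hU : (⋃ n : ℝᵒᵈ, Ioi (OrderDual.ofDual n)) = (univ : Set ℝ) := by
    rw [OrderDual.ofDual.surjective.iUnion_comp (g := fun a => Ioi a), iUnion_Ioi]
  have h := tendsto_setIntegral_of_monotone (ι := ℝᵒᵈ) (μ := volume) (f := g)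
    (s := fun a => Ioi (OrderDual.ofDual a)) (fun _ => measurableSet_Ioi)
    (fun a b hab => Ioi_subset_Ioi hab) (by rw [hU]; exact hg.integrableOn)
  rw [hU, setIntegral_univ] at h
  exact h

lemma aux_gamma_section {p : ℝ} (hp : 0 < p) (t : ℝ) :
    ∫ u in Ioi (0:ℝ), u ^ (p - 1) * Real.exp (-((1 + t ^ 2) * u))
      = (1 + t ^ 2) ^ (-p) * Real.Gamma p := by
  have ht : (0:ℝ) < 1 + t ^ 2 := by positivity
  rw [Real.integral_rpow_mul_exp_neg_mul_Ioi hp ht, one_div, ← Real.rpow_neg_one,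
    ← Real.rpow_mul ht.le]
  norm_num

lemma aux_section_integrable {p : ℝ} (hp : 0 < p) (t : ℝ) :
    IntegrableOn (fun u : ℝ => u ^ (p - 1) * Real.exp (-((1 + t ^ 2) * u))) (Ioi 0) := by
  have hG := Real.GammaIntegral_convergent hp
  refine hG.mono' ?_ ?_
  · exact (Measurable.aestronglyMeasurable (by fun_prop)).restrict
  · rw [ae_restrict_iff' measurableSet_Ioi]
    refine ae_of_all _ (fun u hu => ?_)
    have hu0 : (0:ℝ) < u := hu
    have h1 : Real.exp (-((1 + t ^ 2) * u)) ≤ Real.exp (-u) := by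
      apply Real.exp_le_exp.2
      nlinarith [sq_nonneg t]
    rw [Real.norm_eq_abs, abs_mul, abs_of_nonneg (Real.rpow_nonneg hu0.le _),
      abs_of_nonneg (Real.exp_nonneg _)]
    calc u ^ (p - 1) * Real.exp (-((1 + t ^ 2) * u))
        ≤ u ^ (p - 1) * Real.exp (-u) := by
          exact mul_le_mul_of_nonneg_left h1 (Real.rpow_nonneg hu0.le _)
      _ = Real.exp (-u) * u ^ (p - 1) := mul_comm _ _

lemma aux_value {p : ℝ} (hp : 1/2 < p) :
    ∫ t : ℝ, (1 + t ^ 2) ^ (-p) = Real.sqrt π * Real.Gamma (p - 1/2) / Real.Gamma p := by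
  have hp0 : 0 < p := by linarith
  have hΓ : 0 < Real.Gamma p := Real.Gamma_pos_of_pos hp0
  set F : ℝ × ℝ → ℝ := fun z => z.2 ^ (p - 1) * Real.exp (-((1 + z.1 ^ 2) * z.2)) with hF
  have hFmeas : AEStronglyMeasurable F (volume.prod (volume.restrict (Ioi 0))) :=
    (Measurable.aestronglyMeasurable (by fun_prop))
  have hnorm : ∀ t : ℝ, (∫ u in Ioi (0:ℝ), ‖F (t, u)‖)
      = (1 + t ^ 2) ^ (-p) * Real.Gamma p := by
    intro t
    rw [← aux_gamma_section hp0 t]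
    refine setIntegral_congr_fun measurableSet_Ioi (fun u hu => ?_)
    have hu0 : (0:ℝ) < u := hu
    rw [Real.norm_eq_abs, abs_mul, abs_of_nonneg (Real.rpow_nonneg hu0.le _),
      abs_of_nonneg (Real.exp_nonneg _)]
  have hFint : Integrable F (volume.prod (volume.restrict (Ioi 0))) := by
    refine (MeasureTheory.integrable_prod_iff (μ := (volume : Measure ℝ))
      (ν := (volume : Measure ℝ).restrict (Ioi (0:ℝ))) hFmeas).mpr ⟨?_, ?_⟩
    · exact ae_of_all _ (fun t => aux_section_integrable hp0 t)
    · apply Integrable.congr (((aux_integrable_q hp).mul_const (Real.Gamma p)))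
      exact ae_of_all _ (fun t => (hnorm t).symm)
  have hswap := MeasureTheory.integral_integral_swap (f := fun t u => F (t, u)) hFint
  -- LHS of hswap
  have hL : (∫ t : ℝ, ∫ u in Ioi (0:ℝ), F (t, u))
      = (∫ t : ℝ, (1 + t ^ 2) ^ (-p)) * Real.Gamma p := by
    rw [← integral_mul_const]
    congr 1; funext t
    exact aux_gamma_section hp0 t
  -- RHS of hswap
  have hR : (∫ u in Ioi (0:ℝ), ∫ t : ℝ, F (t, u))
      = Real.sqrt π * Real.Gamma (p - 1/2) := by
    have hcongr : ∀ u ∈ Ioi (0:ℝ), (∫ t : ℝ, F (t, u))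
        = Real.sqrt π * (u ^ (p - 1/2 - 1) * Real.exp (-(1 * u))) := by
      intro u hu
      have hu0 : (0:ℝ) < u := hu
      have : (∫ t : ℝ, F (t, u))
          = ∫ t : ℝ, (u ^ (p - 1) * Real.exp (-u)) * Real.exp (-u * t ^ 2) := by
        congr 1; funext t
        rw [hF]
        simp only
        rw [show -((1 + t ^ 2) * u) = -u + -u * t ^ 2 by ring, Real.exp_add]
        ring
      rw [this, integral_const_mul, integral_gaussian, Real.sqrt_div pi_pos.le,
        Real.sqrt_eq_rpow u, div_eq_mul_inv (Real.sqrt π),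
        ← Real.rpow_neg_one (u ^ ((1:ℝ)/2)), ← Real.rpow_mul hu0.le,
        show p - 1/2 - 1 = (p - 1) + 1/2 * (-1) by ring, Real.rpow_add hu0, one_mul]
      ring
    rw [setIntegral_congr_fun measurableSet_Ioi hcongr, integral_const_mul,
      Real.integral_rpow_mul_exp_neg_mul_Ioi (by linarith) one_pos]
    norm_num
  rw [hL, hR] at hswap
  field_simp at hswap ⊢
  linarith [hswap]


/-- For `0 < α < 2`,
`lim_{φ → 0⁺} φ^(1+α) ∫₀^∞ r (1 + r² - 2r cos φ)^(-(1+α/2)) dr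
  = √π · Γ((1+α)/2) / Γ(1+α/2)`. -/
theorem stmt3 (α : ℝ) (hα : 0 < α) (hα2 : α < 2) :
    Filter.Tendsto
      (fun φ : ℝ => φ ^ (1 + α) *
        ∫ r in Set.Ioi (0 : ℝ), r * (1 + r ^ 2 - 2 * r * Real.cos φ) ^ (-(1 + α / 2)))
      (nhdsWithin 0 (Set.Ioi 0))
      (nhds (Real.sqrt π * Real.Gamma ((1 + α) / 2) / Real.Gamma (1 + α / 2))) := by
  have hpi : (0:ℝ) < π := Real.pi_pos
  set g0 : ℝ → ℝ := fun t => (1 + t ^ 2) ^ (-(1 + α / 2)) with hg0def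
  set g1 : ℝ → ℝ := fun t => t * (1 + t ^ 2) ^ (-(1 + α / 2)) with hg1def
  have hg0 : Integrable g0 := aux_integrable_q (q := 1 + α / 2) (by linarith)
  have hg1 : Integrable g1 := by
    refine (aux_integrable_q (q := (1 + α) / 2) (by linarith)).mono'
      (Measurable.aestronglyMeasurable (by fun_prop)) (ae_of_all _ (fun t => ?_))
    have hb : (0:ℝ) < 1 + t ^ 2 := by positivity
    have h1 : |t| ≤ (1 + t ^ 2) ^ ((1:ℝ)/2) := by
      rw [← Real.sqrt_eq_rpow, ← Real.sqrt_sq_eq_abs]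
      exact Real.sqrt_le_sqrt (by nlinarith)
    calc ‖t * (1 + t ^ 2) ^ (-(1 + α / 2))‖
        = |t| * (1 + t ^ 2) ^ (-(1 + α / 2)) := by
          rw [norm_mul, Real.norm_eq_abs, Real.norm_eq_abs,
            abs_of_nonneg (Real.rpow_nonneg hb.le _)]
      _ ≤ (1 + t ^ 2) ^ ((1:ℝ)/2) * (1 + t ^ 2) ^ (-(1 + α / 2)) :=
          mul_le_mul_of_nonneg_right h1 (Real.rpow_nonneg hb.le _)
      _ = (1 + t ^ 2) ^ (-((1 + α) / 2)) := by
          rw [← Real.rpow_add hb]; congr 1; ring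
  set L : ℝ := ∫ t : ℝ, g0 t with hLdef
  set A : ℝ → ℝ := fun a => ∫ t in Ioi a, g0 t with hAdef
  set B : ℝ → ℝ := fun a => ∫ t in Ioi a, g1 t with hBdef
  set m : ℝ → ℝ := fun φ => -(Real.cos φ / Real.sin φ) with hmdef
  -- the limit of the lower endpoint
  have hsin0 : Tendsto Real.sin (𝓝[>] (0:ℝ)) (𝓝[>] (0:ℝ)) := by
    apply tendsto_nhdsWithin_of_tendsto_nhds_of_eventually_within
    · have := (Real.continuous_sin.tendsto 0).mono_left
        (nhdsWithin_le_nhds (s := Ioi (0:ℝ)))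
      simpa using this
    · filter_upwards [Ioo_mem_nhdsGT_of_mem
        (⟨le_refl (0:ℝ), by linarith⟩ : (0:ℝ) ∈ Ico (0:ℝ) π)] with x hx
      exact Real.sin_pos_of_pos_of_lt_pi hx.1 hx.2
  have hcos : Tendsto Real.cos (𝓝[>] (0:ℝ)) (𝓝 1) := by
    have := (Real.continuous_cos.tendsto 0).mono_left
      (nhdsWithin_le_nhds (s := Ioi (0:ℝ)))
    simpa using this
  have hm : Tendsto m (𝓝[>] (0:ℝ)) atBot := by
    apply Filter.tendsto_neg_atTop_atBot.comp
    have hinv : Tendsto (fun φ => (Real.sin φ)⁻¹) (𝓝[>] (0:ℝ)) atTop :=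
      tendsto_inv_nhdsGT_zero.comp hsin0
    have := hcos.pos_mul_atTop one_pos hinv
    simpa [div_eq_mul_inv] using this
  -- limit of A ∘ m
  have hA : Tendsto (fun φ => A (m φ)) (𝓝[>] (0:ℝ)) (𝓝 L) :=
    (aux_tendsto_Ioi hg0).comp hm
  -- sin φ * B (m φ) → 0
  have hBbd : ∀ a : ℝ, ‖B a‖ ≤ ∫ t : ℝ, ‖g1 t‖ := by
    intro a
    calc ‖∫ t in Ioi a, g1 t‖ ≤ ∫ t in Ioi a, ‖g1 t‖ := norm_integral_le_integral_norm _
      _ ≤ ∫ t : ℝ, ‖g1 t‖ :=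
          setIntegral_le_integral hg1.norm (ae_of_all _ (fun t => norm_nonneg _))
  have hsB : Tendsto (fun φ => Real.sin φ * B (m φ)) (𝓝[>] (0:ℝ)) (𝓝 0) := by
    have hbound : ∀ φ : ℝ, ‖Real.sin φ * B (m φ)‖ ≤ |Real.sin φ| * ∫ t : ℝ, ‖g1 t‖ := by
      intro φ
      rw [norm_mul, Real.norm_eq_abs]
      exact mul_le_mul_of_nonneg_left (hBbd (m φ)) (abs_nonneg _)
    have htend : Tendsto (fun φ => |Real.sin φ| * ∫ t : ℝ, ‖g1 t‖) (𝓝[>] (0:ℝ)) (𝓝 0) := by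
      have : Tendsto (fun φ => |Real.sin φ| * ∫ t : ℝ, ‖g1 t‖) (𝓝[>] (0:ℝ))
          (𝓝 (|Real.sin 0| * ∫ t : ℝ, ‖g1 t‖)) :=
        (((Real.continuous_sin.abs.tendsto 0).mono_left
          (nhdsWithin_le_nhds (s := Ioi (0:ℝ)))).mul_const _)
      simpa using this
    exact squeeze_zero_norm hbound htend
  -- (φ / sin φ) ^ (1 + α) → 1
  have hq : Tendsto (fun φ : ℝ => Real.sin φ / φ) (𝓝[>] (0:ℝ)) (𝓝 1) := by
    have h := hasDerivAt_iff_tendsto_slope.mp (Real.hasDerivAt_sin 0)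
    rw [Real.cos_zero] at h
    have h2 := h.mono_left (nhdsWithin_mono 0 (fun x hx => ne_of_gt hx))
    exact h2.congr (fun x => by simp [slope_fun_def, Real.sin_zero, div_eq_inv_mul])
  have hrat : Tendsto (fun φ : ℝ => (φ / Real.sin φ) ^ (1 + α)) (𝓝[>] (0:ℝ)) (𝓝 1) := by
    have h1 := (hq.inv₀ one_ne_zero).congr (fun φ => by rw [inv_div])
    have h2 := h1.rpow_const (p := 1 + α) (Or.inr (by linarith))
    simpa using h2
  -- main limit of the model function
  have hG : Tendsto (fun φ : ℝ => (φ / Real.sin φ) ^ (1 + α) *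
      (Real.sin φ * B (m φ) + Real.cos φ * A (m φ))) (𝓝[>] (0:ℝ))
      (𝓝 (1 * (0 + 1 * L))) :=
    hrat.mul (hsB.add (hcos.mul hA))
  have hval : 1 * (0 + 1 * L) = Real.sqrt π * Real.Gamma ((1 + α) / 2) /
      Real.Gamma (1 + α / 2) := by
    rw [one_mul, zero_add, one_mul, hLdef, hg0def, aux_value (p := 1 + α / 2) (by linarith)]
    norm_num
    rw [show (1 + α / 2) - 1/2 = (1 + α) / 2 by ring]
  rw [← hval]
  -- now transfer via eventual equality
  apply hG.congr'
  filter_upwards [Ioo_mem_nhdsGT_of_mem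
    (⟨le_refl (0:ℝ), by linarith⟩ : (0:ℝ) ∈ Ico (0:ℝ) (π/2))] with φ hφ
  obtain ⟨hφ1, hφ2⟩ := hφ
  have hσ : 0 < Real.sin φ := Real.sin_pos_of_pos_of_lt_pi hφ1 (by linarith)
  have hc : 0 < Real.cos φ := Real.cos_pos_of_mem_Ioo ⟨by linarith, hφ2⟩
  set σ := Real.sin φ with hσdef
  set c := Real.cos φ with hcdef
  have hsc : σ ^ 2 + c ^ 2 = 1 := Real.sin_sq_add_cos_sq φ
  -- step 1 : rewrite the quadratic
  have e1 : (∫ r in Ioi (0:ℝ), r * (1 + r ^ 2 - 2 * r * c) ^ (-(1 + α / 2)))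
      = ∫ r in Ioi (0:ℝ), r * ((r - c) ^ 2 + σ ^ 2) ^ (-(1 + α / 2)) := by
    refine setIntegral_congr_fun measurableSet_Ioi (fun r _ => ?_)
    rw [show 1 + r ^ 2 - 2 * r * c = (r - c) ^ 2 + σ ^ 2 by linear_combination -hsc]
  -- step 2 : shift
  have e2 : (∫ r in Ioi (0:ℝ), r * ((r - c) ^ 2 + σ ^ 2) ^ (-(1 + α / 2)))
      = ∫ x in Ioi (-c), (x + c) * (x ^ 2 + σ ^ 2) ^ (-(1 + α / 2)) := by
    have := aux_shift (fun r => r * ((r - c) ^ 2 + σ ^ 2) ^ (-(1 + α / 2))) (-c) c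
    rw [neg_add_cancel] at this
    rw [← this]
    refine setIntegral_congr_fun measurableSet_Ioi (fun x _ => ?_)
    simp only [add_sub_cancel_right]
  -- step 3 : scale
  have e3 : (∫ x in Ioi (-c), (x + c) * (x ^ 2 + σ ^ 2) ^ (-(1 + α / 2)))
      = σ * ∫ t in Ioi (-(c/σ)), (σ * t + c) * ((σ * t) ^ 2 + σ ^ 2) ^ (-(1 + α / 2)) := by
    have h := integral_comp_mul_left_Ioi
      (fun x => (x + c) * (x ^ 2 + σ ^ 2) ^ (-(1 + α / 2))) (-(c/σ)) hσ
    rw [show σ * -(c/σ) = -c by field_simp] at h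
    rw [h, smul_eq_mul, ← mul_assoc, mul_inv_cancel₀ hσ.ne', one_mul]
  -- step 4 : simplify integrand
  have e4 : (∫ t in Ioi (-(c/σ)), (σ * t + c) * ((σ * t) ^ 2 + σ ^ 2) ^ (-(1 + α / 2)))
      = σ ^ ((2:ℝ) * (-(1 + α / 2))) * (σ * B (-(c/σ)) + c * A (-(c/σ))) := by
    have e4a : (∫ t in Ioi (-(c/σ)), (σ * t + c) * ((σ * t) ^ 2 + σ ^ 2) ^ (-(1 + α / 2)))
        = ∫ t in Ioi (-(c/σ)), σ ^ ((2:ℝ) * (-(1 + α / 2))) *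
            (σ * g1 t + c * g0 t) := by
      refine setIntegral_congr_fun measurableSet_Ioi (fun t _ => ?_)
      have hb : (0:ℝ) < 1 + t ^ 2 := by positivity
      rw [show (σ * t) ^ 2 + σ ^ 2 = σ ^ 2 * (1 + t ^ 2) by ring,
        Real.mul_rpow (sq_nonneg σ) hb.le,
        show (σ:ℝ) ^ (2:ℕ) = σ ^ ((2:ℕ):ℝ) from (Real.rpow_natCast σ 2).symm,
        ← Real.rpow_mul hσ.le]
      push_cast
      rw [hg0def, hg1def]
      ring
    rw [e4a, integral_const_mul]
    congr 1
    rw [integral_add ((hg1.const_mul σ).integrableOn) ((hg0.const_mul c).integrableOn),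
      integral_const_mul, integral_const_mul]
  -- put everything together
  have key : φ ^ (1 + α) * ∫ r in Ioi (0:ℝ), r * (1 + r ^ 2 - 2 * r * c) ^ (-(1 + α / 2))
      = (φ / σ) ^ (1 + α) * (σ * B (-(c/σ)) + c * A (-(c/σ))) := by
    rw [e1, e2, e3, e4]
    have hσpow : σ * σ ^ ((2:ℝ) * (-(1 + α / 2))) = σ ^ (-(1 + α)) := by
      nth_rewrite 1 [← Real.rpow_one σ]
      rw [← Real.rpow_add hσ]
      congr 1; ring
    have hdiv : (φ / σ) ^ (1 + α) = φ ^ (1 + α) * σ ^ (-(1 + α)) := by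
      rw [Real.div_rpow hφ1.le hσ.le, Real.rpow_neg hσ.le, div_eq_mul_inv]
    rw [hdiv]
    calc φ ^ (1 + α) * (σ * (σ ^ ((2:ℝ) * (-(1 + α / 2))) *
          (σ * B (-(c/σ)) + c * A (-(c/σ)))))
        = φ ^ (1 + α) * ((σ * σ ^ ((2:ℝ) * (-(1 + α / 2)))) *
          (σ * B (-(c/σ)) + c * A (-(c/σ)))) := by ring
      _ = φ ^ (1 + α) * σ ^ (-(1 + α)) * (σ * B (-(c/σ)) + c * A (-(c/σ))) := by
          rw [hσpow]; ring
  rw [hmdef]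
  simp only
  rw [← hσdef, ← hcdef]
  exact key.symm
end

section
/- Let α be a real number with 0 < α < 2 and define g(φ) = ∫₀^∞ r · (1 + r² - 2r·cos φ)^{-(1+α/2)} dr for 0 < φ < π. Then lim_{a → 0⁺} a^α · ∫_a^π g(φ) dφ = √π · Γ((1+α)/2) / (α · Γ(1+α/2)), where Γ denotes the Gamma function. -/
open MeasureTheory Real Set Filter
open scoped Topology

lemma aux_integrable_shift (c s q : ℝ) (hs : 0 < s) (hq : 1/2 < q) :
    Integrable (fun r : ℝ => ((r - c)^2 + s^2) ^ (-q)) := by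
  have h2q : ((Module.finrank ℝ ℝ : ℕ) : ℝ) < 2*q := by
    simp [Module.finrank_self]; linarith
  have h0 : Integrable (fun v : ℝ => (1 + v^2) ^ (-q)) := by
    have h := integrable_rpow_neg_one_add_norm_sq (E := ℝ) (μ := volume) h2q
    have he : ∀ v : ℝ, ((1:ℝ) + ‖v‖^2) ^ (-(2*q)/2) = (1 + v^2) ^ (-q) := by
      intro v
      rw [Real.norm_eq_abs, sq_abs]
      congr 1
      ring
    simpa only [he] using h
  have h1 : Integrable (fun r : ℝ => (1 + ((r - c)/s)^2) ^ (-q)) :=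
    (h0.comp_div hs.ne').comp_sub_right c
  have h2 := h1.const_mul ((s^2) ^ (-q))
  refine h2.congr (Eventually.of_forall fun r => ?_)
  show (s^2) ^ (-q) * (1 + ((r - c)/s)^2) ^ (-q) = ((r - c)^2 + s^2) ^ (-q)
  rw [← Real.mul_rpow (sq_nonneg s) (by positivity)]
  congr 1
  field_simp
  ring

lemma aux_fct_integrable {p : ℝ} (hp : 1/2 < p) :
    Integrable (fun v : ℝ => (1 + v^2) ^ (-p)) := by
  have h := aux_integrable_shift 0 1 p one_pos hp
  refine h.congr (Eventually.of_forall fun r => ?_)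
  norm_num [add_comm]

lemma aux_fct_cont (p : ℝ) : Continuous (fun v : ℝ => (1 + v^2) ^ (-p)) := by
  apply Continuous.rpow_const (by continuity)
  intro x
  left
  positivity

lemma aux_int_part1 {p : ℝ} (c s : ℝ) (hs : 0 < s) (hp : 1 < p) :
    Integrable (fun r : ℝ => (r - c) * ((r - c)^2 + s^2) ^ (-p)) := by
  have hbig := aux_integrable_shift c s (p - 1/2) hs (by linarith)
  refine hbig.mono' ?_ (Eventually.of_forall fun r => ?_)
  · apply Measurable.aestronglyMeasurable
    fun_prop
  · have hA : (0:ℝ) < (r - c)^2 + s^2 := by positivity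
    have h1 : |r - c| ≤ ((r - c)^2 + s^2) ^ ((1:ℝ)/2) := by
      rw [← Real.sqrt_eq_rpow, ← Real.sqrt_sq_eq_abs]
      exact Real.sqrt_le_sqrt (by nlinarith [sq_nonneg s])
    calc ‖(r - c) * ((r - c)^2 + s^2) ^ (-p)‖
        = |r - c| * ((r - c)^2 + s^2) ^ (-p) := by
          rw [norm_mul, Real.norm_eq_abs, Real.norm_eq_abs,
            abs_of_nonneg (Real.rpow_nonneg hA.le _)]
      _ ≤ ((r - c)^2 + s^2) ^ ((1:ℝ)/2) * ((r - c)^2 + s^2) ^ (-p) := by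
          apply mul_le_mul_of_nonneg_right h1 (Real.rpow_nonneg hA.le _)
      _ = ((r - c)^2 + s^2) ^ (-(p - 1/2)) := by
          rw [← Real.rpow_add hA]; congr 1; ring

noncomputable def auxK (p x : ℝ) : ℝ :=
  (∫ v in Ioi (0:ℝ), (1 + v^2) ^ (-p)) - ∫ v in (0:ℝ)..x, (1 + v^2) ^ (-p)

lemma aux_hasDerivAt_K {p : ℝ} (hp : 1/2 < p) (x : ℝ) :
    HasDerivAt (auxK p) (-((1 + x^2) ^ (-p))) x := by
  have hQ : HasDerivAt (fun u => ∫ v in (0:ℝ)..u, (1 + v^2) ^ (-p)) ((1 + x^2) ^ (-p)) x := by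
    refine intervalIntegral.integral_hasDerivAt_right
      ((aux_fct_integrable hp).intervalIntegrable)
      ((aux_fct_cont p).stronglyMeasurable.stronglyMeasurableAtFilter)
      ((aux_fct_cont p).continuousAt)
  have h := hQ.const_sub (∫ v in Ioi (0:ℝ), (1 + v^2) ^ (-p))
  exact h

lemma aux_K_cont {p : ℝ} (hp : 1/2 < p) : Continuous (auxK p) :=
  continuous_iff_continuousAt.2 fun x => (aux_hasDerivAt_K hp x).continuousAt

lemma aux_K_eq_Ioi {p : ℝ} (hp : 1/2 < p) (x : ℝ) :
    auxK p x = ∫ v in Ioi x, (1 + v^2) ^ (-p) := by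
  have hint := aux_fct_integrable hp
  rcases le_total x 0 with hx | hx
  · have hsplit : Ioc x 0 ∪ Ioi (0:ℝ) = Ioi x := Ioc_union_Ioi_eq_Ioi hx
    rw [← hsplit, setIntegral_union (Ioc_disjoint_Ioi le_rfl) measurableSet_Ioi
      hint.integrableOn hint.integrableOn]
    rw [auxK, intervalIntegral.integral_symm, intervalIntegral.integral_of_le hx]
    ring
  · have hsplit : Ioc 0 x ∪ Ioi x = Ioi (0:ℝ) := Ioc_union_Ioi_eq_Ioi hx
    rw [auxK, intervalIntegral.integral_of_le hx, ← hsplit,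
      setIntegral_union (Ioc_disjoint_Ioi le_rfl) measurableSet_Ioi
      hint.integrableOn hint.integrableOn]
    ring

lemma aux_K_nonneg {p : ℝ} (hp : 1/2 < p) (x : ℝ) : 0 ≤ auxK p x := by
  rw [aux_K_eq_Ioi hp]
  apply setIntegral_nonneg measurableSet_Ioi
  intro v _
  positivity

lemma aux_K_tendsto {p : ℝ} (hp : 1/2 < p) :
    Tendsto (auxK p) atBot (𝓝 (∫ v : ℝ, (1 + v^2) ^ (-p))) := by
  have hint := aux_fct_integrable hp
  have h1 : Tendsto (fun x : ℝ => ∫ v in x..(0:ℝ), (1 + v^2) ^ (-p)) atBot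
      (𝓝 (∫ v in Iic (0:ℝ), (1 + v^2) ^ (-p))) :=
    intervalIntegral_tendsto_integral_Iic 0 hint.integrableOn tendsto_id
  have h2 : Tendsto (auxK p) atBot
      (𝓝 ((∫ v in Ioi (0:ℝ), (1 + v^2) ^ (-p)) + ∫ v in Iic (0:ℝ), (1 + v^2) ^ (-p))) := by
    have : auxK p = fun x => (∫ v in Ioi (0:ℝ), (1 + v^2) ^ (-p)) +
        ∫ v in x..(0:ℝ), (1 + v^2) ^ (-p) := by
      funext x
      rw [auxK, intervalIntegral.integral_symm]
      ring
    rw [this]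
    exact tendsto_const_nhds.add h1
  convert h2 using 2
  rw [← integral_add_compl measurableSet_Iic hint, compl_Iic, add_comm]

lemma aux_K_le {p : ℝ} (hp : 1/2 < p) {x : ℝ} (hx : 0 < x) :
    auxK p x ≤ x ^ (1 - 2*p) / (2*p - 1) := by
  rw [aux_K_eq_Ioi hp]
  have h2p : -(2*p) < -1 := by linarith
  have hmono : ∫ v in Ioi x, (1 + v^2) ^ (-p) ≤ ∫ v in Ioi x, v ^ (-(2*p)) := by
    refine setIntegral_mono_on (aux_fct_integrable hp).integrableOn
      (integrableOn_Ioi_rpow_of_lt h2p hx) measurableSet_Ioi ?_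
    intro v hv
    have hv0 : 0 < v := hx.trans hv
    have : v ^ (-(2*p)) = (v^2) ^ (-p) := by
      rw [← Real.rpow_natCast v 2, ← Real.rpow_mul hv0.le]
      norm_num
    rw [this]
    exact Real.rpow_le_rpow_of_nonpos (by positivity) (by linarith [sq_nonneg v]) (by linarith)
  refine hmono.trans ?_
  rw [integral_Ioi_rpow_of_lt h2p hx]
  rw [show -(2*p) + 1 = 1 - 2*p by ring]
  have hc : (1 - 2*p) ≠ 0 := by linarith
  have hc2 : (2*p - 1) ≠ 0 := by linarith
  rw [show -x ^ (1 - 2*p) / (1 - 2*p) = x ^ (1 - 2*p) / (2*p - 1) by field_simp; ring]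

lemma aux_part1 {p : ℝ} (c s : ℝ) (hs : 0 < s) (hp : 1 < p) :
    ∫ r in Ioi (0:ℝ), (r - c) * ((r - c)^2 + s^2) ^ (-p)
      = (c^2 + s^2) ^ (1 - p) / (2*(p - 1)) := by
  have hA : ∀ r : ℝ, (0:ℝ) < (r - c)^2 + s^2 := fun r => by positivity
  have hderiv : ∀ r ∈ Ici (0:ℝ),
      HasDerivAt (fun r => -(((r - c)^2 + s^2) ^ (1 - p)) / (2*(p - 1)))
        ((r - c) * ((r - c)^2 + s^2) ^ (-p)) r := by
    intro r _
    have hb : HasDerivAt (fun r : ℝ => (r - c)^2 + s^2) (2*(r - c)) r := by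
      have h1 : HasDerivAt (fun r : ℝ => r - c) 1 r := (hasDerivAt_id r).sub_const c
      simpa using (h1.pow 2).add_const (s^2)
    have h2 := (hb.rpow_const (p := 1 - p) (Or.inl (hA r).ne')).neg.div_const (2*(p - 1))
    convert h2 using 1 <;> try rfl
    rw [show (1 - p - 1) = -p by ring]
    have hne : (2*(p-1)) ≠ 0 := by nlinarith
    have hne2 : (p-1) ≠ 0 := by linarith
    field_simp
    ring
  have htend : Tendsto (fun r : ℝ => -(((r - c)^2 + s^2) ^ (1 - p)) / (2*(p - 1)))
      atTop (𝓝 0) := by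
    have h1 : Tendsto (fun r : ℝ => (r - c)^2 + s^2) atTop atTop := by
      apply tendsto_atTop_add_const_right
      have := (tendsto_atTop_add_const_right atTop (-c) tendsto_id)
      have h2 := (tendsto_pow_atTop (n := 2) (by norm_num)).comp this
      refine h2.congr fun r => by simp [sub_eq_add_neg]
    have h2 : Tendsto (fun y : ℝ => y ^ (1 - p)) atTop (𝓝 0) := by
      have := tendsto_rpow_neg_atTop (y := p - 1) (by linarith)
      refine this.congr fun y => by rw [show -(p-1) = 1-p by ring]
    have := (h2.comp h1).neg.div_const (2*(p-1))
    simpa using this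
  have := integral_Ioi_of_hasDerivAt_of_tendsto' hderiv
    (aux_int_part1 c s hs hp).integrableOn htend
  rw [this]
  simp only [zero_sub, neg_sq, neg_div, neg_neg]

lemma aux_part2 {p : ℝ} (c s : ℝ) (hs : 0 < s) (hp : 1 < p) :
    ∫ r in Ioi (0:ℝ), ((r - c)^2 + s^2) ^ (-p)
      = s ^ (1 - 2*p) * auxK p (-(c/s)) := by
  have hp' : 1/2 < p := by linarith
  have hA : ∀ r : ℝ, (0:ℝ) < (r - c)^2 + s^2 := fun r => by positivity
  set Q : ℝ → ℝ := fun x => ∫ v in (0:ℝ)..x, (1 + v^2) ^ (-p) with hQdef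
  have hQd : ∀ y : ℝ, HasDerivAt Q ((1 + y^2) ^ (-p)) y := fun y =>
    intervalIntegral.integral_hasDerivAt_right
      ((aux_fct_integrable hp').intervalIntegrable)
      ((aux_fct_cont p).stronglyMeasurable.stronglyMeasurableAtFilter)
      ((aux_fct_cont p).continuousAt)
  have hderiv : ∀ r ∈ Ici (0:ℝ),
      HasDerivAt (fun r => s ^ (1 - 2*p) * Q ((r - c)/s))
        (((r - c)^2 + s^2) ^ (-p)) r := by
    intro r _
    have haff : HasDerivAt (fun r : ℝ => (r - c)/s) (1/s) r := by
      simpa using ((hasDerivAt_id r).sub_const c).div_const s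
    have h2 := ((hQd ((r - c)/s)).comp r haff).const_mul (s ^ (1 - 2*p))
    convert h2 using 1 <;> try rfl
    have e1 : 1 + ((r - c)/s)^2 = ((r - c)^2 + s^2) / s^2 := by field_simp; ring
    have e2 : ((s^2 : ℝ)) ^ (-p) = s ^ (-(2*p)) := by
      rw [← Real.rpow_natCast s 2, ← Real.rpow_mul hs.le]
      norm_num
    rw [e1, Real.div_rpow (hA r).le (sq_nonneg s), e2]
    rw [div_eq_mul_inv, ← Real.rpow_neg hs.le, neg_neg, one_div, ← Real.rpow_neg_one s]
    rw [show s ^ (1 - 2*p) * (((r - c)^2 + s^2) ^ (-p) * s ^ (2*p) * s ^ (-1:ℝ))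
        = ((r - c)^2 + s^2) ^ (-p) * (s ^ (1 - 2*p) * s ^ (2*p) * s ^ (-1:ℝ)) by ring]
    rw [← Real.rpow_add hs, ← Real.rpow_add hs,
      show (1 - 2*p + 2*p + (-1:ℝ)) = 0 by ring, Real.rpow_zero, mul_one]
  have htend : Tendsto (fun r : ℝ => s ^ (1 - 2*p) * Q ((r - c)/s)) atTop
      (𝓝 (s ^ (1 - 2*p) * ∫ v in Ioi (0:ℝ), (1 + v^2) ^ (-p))) := by
    have hQl : Tendsto Q atTop (𝓝 (∫ v in Ioi (0:ℝ), (1 + v^2) ^ (-p))) :=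
      intervalIntegral_tendsto_integral_Ioi 0 (aux_fct_integrable hp').integrableOn tendsto_id
    have haff : Tendsto (fun r : ℝ => (r - c)/s) atTop atTop := by
      apply Tendsto.atTop_div_const hs
      simpa [sub_eq_add_neg] using tendsto_atTop_add_const_right atTop (-c) tendsto_id
    exact (hQl.comp haff).const_mul _
  have hres := integral_Ioi_of_hasDerivAt_of_tendsto' hderiv
    (aux_integrable_shift c s p hs hp').integrableOn htend
  rw [hres, auxK]
  rw [show ((0:ℝ) - c)/s = -(c/s) by ring]
  ring


lemma aux_I {p : ℝ} (hp : 1 < p) :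
    ∫ v : ℝ, (1 + v^2) ^ (-p) = Real.sqrt π * Real.Gamma (p - 1/2) / Real.Gamma p := by
  have hp0 : (0:ℝ) < p := by linarith
  have hΓ : 0 < Real.Gamma p := Real.Gamma_pos_of_pos hp0
  have key : ∀ v : ℝ, ∫ t in Ioi (0:ℝ), t ^ (p - 1) * rexp (-((1 + v^2) * t))
      = (1 + v^2) ^ (-p) * Real.Gamma p := by
    intro v
    have h1 : (0:ℝ) < 1 + v^2 := by positivity
    rw [Real.integral_rpow_mul_exp_neg_mul_Ioi hp0 h1]
    congr 1
    rw [one_div, ← Real.rpow_neg_one (1+v^2), ← Real.rpow_mul h1.le,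
      show ((-1)*p : ℝ) = -p by ring]
  have slice : ∀ v : ℝ, Integrable (fun t => t ^ (p - 1) * rexp (-((1 + v^2) * t)))
      (volume.restrict (Ioi (0:ℝ))) := by
    intro v
    have base : IntegrableOn (fun t : ℝ => rexp (-t) * t ^ (p - 1)) (Ioi 0) :=
      Real.GammaIntegral_convergent hp0
    refine base.mono' (Measurable.aestronglyMeasurable (by fun_prop)) ?_
    filter_upwards [ae_restrict_mem measurableSet_Ioi] with t ht
    have ht0 : (0:ℝ) < t := ht
    rw [Real.norm_eq_abs, abs_of_nonneg (by positivity)]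
    rw [mul_comm]
    apply mul_le_mul_of_nonneg_right _ (Real.rpow_nonneg ht0.le _)
    apply Real.exp_le_exp.2
    nlinarith [sq_nonneg v]
  have measF : AEStronglyMeasurable
      (Function.uncurry fun (v t : ℝ) => t ^ (p - 1) * rexp (-((1 + v^2) * t)))
      (volume.prod (volume.restrict (Ioi (0:ℝ)))) := by
    apply Measurable.aestronglyMeasurable
    fun_prop
  have intnorm : Integrable (fun v : ℝ =>
      ∫ t in Ioi (0:ℝ), ‖t ^ (p - 1) * rexp (-((1 + v^2) * t))‖) volume := by
    have he : (fun v : ℝ => ∫ t in Ioi (0:ℝ), ‖t ^ (p - 1) * rexp (-((1 + v^2) * t))‖)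
        = fun v => (1 + v^2) ^ (-p) * Real.Gamma p := by
      funext v
      rw [← key v]
      apply setIntegral_congr_fun measurableSet_Ioi
      intro t ht
      have ht0 : (0:ℝ) < t := ht
      dsimp only
      rw [Real.norm_eq_abs, abs_of_nonneg (by positivity)]
    rw [he]
    exact (aux_fct_integrable (by linarith)).mul_const _
  have intF : Integrable (Function.uncurry fun (v t : ℝ) => t ^ (p - 1) * rexp (-((1 + v^2) * t)))
      (volume.prod (volume.restrict (Ioi (0:ℝ)))) := by
    refine (integrable_prod_iff measF).2 ⟨Eventually.of_forall fun v => ?_, intnorm⟩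
    exact slice v
  have swap := integral_integral_swap intF
  have lhs : (∫ v : ℝ, ∫ t in Ioi (0:ℝ), t ^ (p - 1) * rexp (-((1 + v^2) * t)))
      = (∫ v : ℝ, (1 + v^2) ^ (-p)) * Real.Gamma p := by
    simp_rw [key]
    exact integral_mul_const _ _
  have inner : ∀ t ∈ Ioi (0:ℝ), (∫ v : ℝ, t ^ (p - 1) * rexp (-((1 + v^2) * t)))
      = Real.sqrt π * (t ^ (p - 1/2 - 1) * rexp (-(1 * t))) := by
    intro t ht
    have ht0 : (0:ℝ) < t := ht
    have h1 : ∀ v : ℝ, t ^ (p - 1) * rexp (-((1 + v^2) * t))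
        = (t ^ (p - 1) * rexp (-t)) * rexp (-t * v^2) := by
      intro v
      rw [mul_assoc, ← Real.exp_add]
      congr 2
      ring
    simp_rw [h1]
    rw [MeasureTheory.integral_const_mul, integral_gaussian t]
    have h2 : Real.sqrt (π / t) = Real.sqrt π * t ^ (-(1/2) : ℝ) := by
      rw [show π/t = π * t⁻¹ by ring, Real.sqrt_mul pi_pos.le, Real.sqrt_inv,
        Real.sqrt_eq_rpow t, ← Real.rpow_neg ht0.le]
    rw [h2]
    rw [show t ^ (p-1) * rexp (-t) * (Real.sqrt π * t ^ (-(1/2):ℝ))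
        = Real.sqrt π * ((t ^ (p-1) * t ^ (-(1/2):ℝ)) * rexp (-t)) by ring]
    rw [← Real.rpow_add ht0, show (p - 1 + -(1/2) : ℝ) = p - 1/2 - 1 by ring, one_mul]
  have rhs : (∫ t in Ioi (0:ℝ), ∫ v : ℝ, t ^ (p - 1) * rexp (-((1 + v^2) * t)))
      = Real.sqrt π * Real.Gamma (p - 1/2) := by
    rw [setIntegral_congr_fun measurableSet_Ioi inner]
    rw [MeasureTheory.integral_const_mul]
    rw [Real.integral_rpow_mul_exp_neg_mul_Ioi (by linarith) one_pos]
    norm_num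
  have : (∫ v : ℝ, (1 + v^2) ^ (-p)) * Real.Gamma p = Real.sqrt π * Real.Gamma (p - 1/2) := by
    rw [← lhs, ← rhs]
    exact swap
  field_simp at this ⊢
  linarith [this]

/-- For `0 < α < 2`, with `g φ = ∫₀^∞ r (1 + r² - 2r cos φ)^(-(1+α/2)) dr`,
`lim_{a → 0⁺} a^α ∫_a^π g(φ) dφ = √π Γ((1+α)/2) / (α Γ(1+α/2))`. -/
theorem stmt4 (α : ℝ) (hα : 0 < α) (hα2 : α < 2)
    (g : ℝ → ℝ)
    (hg : ∀ φ ∈ Set.Ioo (0 : ℝ) π,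
      g φ = ∫ r in Set.Ioi (0 : ℝ), r * (1 + r ^ 2 - 2 * r * Real.cos φ) ^ (-(1 + α / 2))) :
    Filter.Tendsto (fun a : ℝ => a ^ α * ∫ φ in a..π, g φ)
      (nhdsWithin 0 (Set.Ioi 0))
      (nhds (Real.sqrt π * Real.Gamma ((1 + α) / 2) / (α * Real.Gamma (1 + α / 2)))) := by
  have hπ := Real.pi_pos
  set p : ℝ := 1 + α/2 with hpdef
  have hp1 : 1 < p := by rw [hpdef]; linarith
  have hp' : 1/2 < p := by linarith
  -- closed form for g
  set G₀ : ℝ → ℝ := fun φ => 1/α + Real.cos φ *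
      ((Real.sin φ) ^ (1 - 2*p) * auxK p (-(Real.cos φ / Real.sin φ))) with hG₀def
  have gform : ∀ φ ∈ Ioo (0:ℝ) π, g φ = G₀ φ := by
    intro φ hφ
    have hs : 0 < Real.sin φ := Real.sin_pos_of_pos_of_lt_pi hφ.1 hφ.2
    have hbase : ∀ r : ℝ, (1 + r^2 - 2*r*Real.cos φ) = ((r - Real.cos φ)^2 + Real.sin φ^2) := by
      intro r
      linear_combination - Real.sin_sq_add_cos_sq φ
    rw [hg φ hφ]
    have h1 : ∀ r : ℝ, r * (1 + r^2 - 2*r*Real.cos φ) ^ (-(1+α/2))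
        = (r - Real.cos φ) * ((r - Real.cos φ)^2 + Real.sin φ^2) ^ (-p)
          + Real.cos φ * (((r - Real.cos φ)^2 + Real.sin φ^2) ^ (-p)) := by
      intro r
      rw [hbase r, show -(1+α/2) = -p by rw [hpdef]]
      ring
    simp_rw [← hpdef] at h1
    simp_rw [h1]
    rw [integral_add ((aux_int_part1 _ _ hs hp1).integrableOn)
        (((aux_integrable_shift _ _ p hs hp').integrableOn).const_mul _)]
    rw [aux_part1 _ _ hs hp1, MeasureTheory.integral_const_mul, aux_part2 _ _ hs hp1]
    rw [Real.cos_sq_add_sin_sq φ, Real.one_rpow]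
    rw [hG₀def, show 2*(p-1) = α by rw [hpdef]; ring]
  have g_nonneg : ∀ φ ∈ Ioo (0:ℝ) π, 0 ≤ g φ := by
    intro φ hφ
    have hs : 0 < Real.sin φ := Real.sin_pos_of_pos_of_lt_pi hφ.1 hφ.2
    rw [hg φ hφ]
    apply setIntegral_nonneg measurableSet_Ioi
    intro r hr
    have hb : (0:ℝ) < 1 + r^2 - 2*r*Real.cos φ := by
      nlinarith [Real.sin_sq_add_cos_sq φ, sq_nonneg (r - Real.cos φ), sq_nonneg (Real.sin φ), hs]
    exact mul_nonneg (le_of_lt hr) (Real.rpow_nonneg hb.le _)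
  have hG₀meas : Measurable G₀ := by
    apply Measurable.add measurable_const
    apply Real.measurable_cos.mul
    apply Measurable.mul
    · fun_prop
    · exact (aux_K_cont hp').measurable.comp (by fun_prop)
  have hG₀cont : ContinuousOn G₀ (Ioo 0 π) := by
    apply continuousOn_const.add
    apply (Real.continuous_cos.continuousOn).mul
    apply ContinuousOn.mul
    · apply ContinuousOn.rpow_const (Real.continuous_sin.continuousOn)
      intro x hx
      exact Or.inl (Real.sin_pos_of_pos_of_lt_pi hx.1 hx.2).ne'
    · apply (aux_K_cont hp').comp_continuousOn
      apply ContinuousOn.neg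
      apply ContinuousOn.div (Real.continuous_cos.continuousOn) (Real.continuous_sin.continuousOn)
      intro x hx
      exact (Real.sin_pos_of_pos_of_lt_pi hx.1 hx.2).ne'
  -- H and its derivative
  set H : ℝ → ℝ := fun a => Real.sin a ^ (-α) * auxK p (-(Real.cos a / Real.sin a)) / α
    with hHdef
  have hHd : ∀ x ∈ Ioo (0:ℝ) π, HasDerivAt H (-(g x)) x := by
    intro x hx
    have hs : 0 < Real.sin x := Real.sin_pos_of_pos_of_lt_pi hx.1 hx.2
    have h1 : HasDerivAt (fun a => Real.sin a ^ (-α))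
        (Real.cos x * (-α) * Real.sin x ^ (-α - 1)) x := by
      have := (Real.hasDerivAt_sin x).rpow_const (p := -α) (Or.inl hs.ne')
      convert this using 1
    have hcot : HasDerivAt (fun a => -(Real.cos a / Real.sin a)) ((Real.sin x ^ 2)⁻¹) x := by
      have hd := ((Real.hasDerivAt_cos x).div (Real.hasDerivAt_sin x) hs.ne').neg
      convert hd using 1 <;> try rfl
      have h2 : Real.sin x ^ 2 ≠ 0 := by positivity
      field_simp
      linear_combination - Real.sin_sq_add_cos_sq x
    have hK : HasDerivAt (fun a => auxK p (-(Real.cos a / Real.sin a)))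
        (-((1 + (-(Real.cos x / Real.sin x))^2) ^ (-p)) * (Real.sin x ^ 2)⁻¹) x :=
      (aux_hasDerivAt_K hp' _).comp x hcot
    have hfct : ((1:ℝ) + (-(Real.cos x / Real.sin x))^2) ^ (-p) = Real.sin x ^ (2*p) := by
      have e1 : ((1:ℝ) + (-(Real.cos x / Real.sin x))^2) = ((Real.sin x)^2)⁻¹ := by
        field_simp
        linear_combination Real.sin_sq_add_cos_sq x
      rw [e1, ← Real.rpow_natCast (Real.sin x) 2, ← Real.rpow_neg hs.le,
        ← Real.rpow_mul hs.le, show (-(((2:ℕ)):ℝ)) * (-p) = 2*p by push_cast; ring]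
    have hmul := (h1.mul hK).div_const α
    convert hmul using 1 <;> try rfl
    rw [gform x hx, hG₀def]
    rw [hfct]
    have e2 : (Real.sin x^2)⁻¹ = Real.sin x ^ (-2:ℝ) := by
      rw [← Real.rpow_natCast (Real.sin x) 2, ← Real.rpow_neg hs.le]
      norm_num
    rw [e2]
    have e3 : Real.sin x ^ (-α) * (-(Real.sin x ^ (2*p)) * Real.sin x ^ (-2:ℝ)) = -1 := by
      rw [show Real.sin x ^ (-α) * (-(Real.sin x ^ (2*p)) * Real.sin x ^ (-2:ℝ))
          = -(Real.sin x ^ (-α) * Real.sin x ^ (2*p) * Real.sin x ^ (-2:ℝ)) by ring,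
        ← Real.rpow_add hs, ← Real.rpow_add hs,
        show -α + 2*p + (-2:ℝ) = 0 by rw [hpdef]; ring, Real.rpow_zero]
    rw [e3, show (1 - 2*p) = -α - 1 by rw [hpdef]; ring]
    field_simp
    ring
  -- value of H at π
  have Hπ0 : H π = 0 := by
    rw [hHdef]
    simp [Real.sin_pi, Real.zero_rpow (show -α ≠ 0 by linarith)]
  -- limit of H at π from within Iic π
  have Hlim : Tendsto H (𝓝[Iic π] π) (𝓝 0) := by
    have hmem : Ioc (π/2) π ∈ 𝓝[Iic π] π := by
      rw [← Ioi_inter_Iic]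
      exact inter_mem (mem_nhdsWithin_of_mem_nhds (Ioi_mem_nhds (by linarith)))
        self_mem_nhdsWithin
    set B : ℝ → ℝ := fun b => Real.sin b * (-Real.cos b) ^ (-(1+α)) / ((1+α)*α) with hBdef
    have hB : Tendsto B (𝓝[Iic π] π) (𝓝 0) := by
      have hc : ContinuousAt B π := by
        apply ContinuousAt.div_const
        apply ContinuousAt.mul (Real.continuous_sin.continuousAt)
        apply ContinuousAt.rpow_const (Real.continuous_cos.continuousAt.neg)
        left
        simp
      have : B π = 0 := by
        rw [hBdef]
        simp [Real.sin_pi]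
      rw [← this]
      exact hc.continuousWithinAt
    have hH0 : ∀ b ∈ Ioc (π/2) π, 0 ≤ H b := by
      intro b hb
      have hsb : 0 ≤ Real.sin b := Real.sin_nonneg_of_nonneg_of_le_pi (by linarith [hb.1]) hb.2
      rw [hHdef]
      have := aux_K_nonneg hp' (-(Real.cos b / Real.sin b))
      positivity
    have hHle : ∀ b ∈ Ioc (π/2) π, H b ≤ B b := by
      intro b hb
      rcases eq_or_lt_of_le hb.2 with heq | hlt
      · rw [heq, Hπ0, hBdef]
        simp [Real.sin_pi]
      · have hsb : 0 < Real.sin b := Real.sin_pos_of_pos_of_lt_pi (by linarith [hb.1]) hlt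
        have hcb : Real.cos b < 0 := Real.cos_neg_of_pi_div_two_lt_of_lt hb.1 (by linarith)
        have hx0 : 0 < -(Real.cos b / Real.sin b) := by
          rw [neg_div']
          exact div_pos (by linarith) hsb
        have hKle := aux_K_le hp' hx0
        have step1 : H b ≤ Real.sin b ^ (-α) *
            ((-(Real.cos b / Real.sin b)) ^ (1-2*p) / (2*p-1)) / α := by
          simp only [hHdef]
          gcongr
        refine step1.trans (le_of_eq ?_)
        have e1 : (-(Real.cos b / Real.sin b)) = (-Real.cos b) / Real.sin b := by ring
        have e4 : Real.sin b ^ (-α) * Real.sin b ^ (1+α) = Real.sin b := by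
          rw [← Real.rpow_add hsb, show -α + (1+α) = (1:ℝ) by ring, Real.rpow_one]
        have h2p1 : 2*p - 1 = 1 + α := by rw [hpdef]; ring
        have e5 : Real.sin b ^ (-(1+α)) = (Real.sin b ^ (1+α))⁻¹ := Real.rpow_neg hsb.le _
        simp only [hBdef]
        rw [e1, Real.div_rpow (by linarith) hsb.le,
          show (1 - 2*p) = -(1+α) by rw [hpdef]; ring, h2p1, e5]
        conv_rhs => rw [← e4]
        have hY : Real.sin b ^ (1+α) ≠ 0 := (Real.rpow_pos_of_pos hsb _).ne'
        field_simp
    apply tendsto_of_tendsto_of_tendsto_of_le_of_le' tendsto_const_nhds hB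
    · filter_upwards [hmem] with b hb using hH0 b hb
    · filter_upwards [hmem] with b hb using hHle b hb
  -- integrability of g on (a, π]
  have gIntOn : ∀ a ∈ Ioo (0:ℝ) π, IntegrableOn g (Ioc a π) := by
    intro a ha
    set m : ℝ := max a (π/2) with hmdef
    have hm0 : 0 < m := lt_of_lt_of_le ha.1 (le_max_left _ _)
    have hmπ : m < π := max_lt ha.2 (by linarith)
    have pieceA : IntegrableOn g (Ioc a m) := by
      have hsub : Icc a m ⊆ Ioo 0 π := fun x hx => ⟨lt_of_lt_of_le ha.1 hx.1, lt_of_le_of_lt hx.2 hmπ⟩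
      have hGint : IntegrableOn G₀ (Icc a m) := (hG₀cont.mono hsub).integrableOn_Icc
      have : IntegrableOn g (Icc a m) := by
        refine hGint.congr_fun (fun x hx => (gform x (hsub hx)).symm) measurableSet_Icc
      exact this.mono_set Ioc_subset_Icc_self
    have pieceB : IntegrableOn g (Ioc (π/2) π) := by
      have hae : ∀ᵐ x ∂(volume.restrict (Ioc (π/2) π)), x ∈ Ioo (π/2) π := by
        have h1 : ∀ᵐ x ∂(volume.restrict (Ioc (π/2) π)), x ∈ Ioc (π/2) π :=
          ae_restrict_mem measurableSet_Ioc
        have h2 : (volume.restrict (Ioc (π/2) π)) {π} = 0 := by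
          rw [Measure.restrict_apply (measurableSet_singleton π)]
          exact measure_mono_null inter_subset_left Real.volume_singleton
        have h3 : ∀ᵐ (x:ℝ) ∂(volume.restrict (Ioc (π/2) π)), x ≠ π := by
          rw [ae_iff]
          convert h2 using 2
          ext x
          simp
        filter_upwards [h1, h3] with x hx hne
        exact ⟨hx.1, lt_of_le_of_ne hx.2 hne⟩
      have haemem : ∀ᵐ x ∂(volume.restrict (Ioc (π/2) π)), x ∈ Ioo (0:ℝ) π := by
        filter_upwards [hae] with x hx
        exact ⟨by linarith [hx.1], hx.2⟩
      have hgae : g =ᵐ[volume.restrict (Ioc (π/2) π)] G₀ := by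
        filter_upwards [haemem] with x hx using gform x hx
      refine Integrable.mono' (g := fun _ => 1/α)
        ((integrableOn_const_iff).2 (Or.inr measure_Ioc_lt_top)) ?_ ?_
      · exact (hG₀meas.aestronglyMeasurable).congr hgae.symm
      · filter_upwards [hae, haemem] with x hx hx0
        rw [Real.norm_eq_abs, abs_of_nonneg (g_nonneg x hx0), gform x hx0, hG₀def]
        have hsb : 0 ≤ Real.sin x := Real.sin_nonneg_of_nonneg_of_le_pi (by linarith [hx.1]) hx0.2.le
        have hcb : Real.cos x ≤ 0 := Real.cos_nonpos_of_pi_div_two_le_of_le hx.1.le (by linarith [hx.2])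
        have : Real.cos x * (Real.sin x ^ (1-2*p) * auxK p (-(Real.cos x / Real.sin x))) ≤ 0 :=
          mul_nonpos_of_nonpos_of_nonneg hcb
            (mul_nonneg (Real.rpow_nonneg hsb _) (aux_K_nonneg hp' _))
        linarith
    have hunion : Ioc a π = Ioc a m ∪ Ioc m π := (Ioc_union_Ioc_eq_Ioc (le_max_left _ _) hmπ.le).symm
    rw [hunion]
    exact pieceA.union (pieceB.mono_set (Ioc_subset_Ioc (le_max_right _ _) le_rfl))
  -- the key identity
  have key_eq : ∀ a ∈ Ioo (0:ℝ) π, (∫ φ in a..π, g φ) = H a := by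
    intro a ha
    have gII : IntervalIntegrable g volume a π :=
      (intervalIntegrable_iff_integrableOn_Ioc_of_le ha.2.le).2 (gIntOn a ha)
    have HcontOn : ContinuousOn H (Icc a π) := by
      intro x hx
      rcases eq_or_lt_of_le hx.2 with heq | hlt
      · rw [heq]
        have : Tendsto H (𝓝[Icc a π] π) (𝓝 0) :=
          Hlim.mono_left (nhdsWithin_mono π (fun y hy => hy.2))
        rw [ContinuousWithinAt, Hπ0]
        exact this
      · exact ((hHd x ⟨lt_of_lt_of_le ha.1 hx.1, hlt⟩).continuousAt).continuousWithinAt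
    have := intervalIntegral.integral_eq_sub_of_hasDeriv_right_of_le ha.2.le HcontOn
      (fun x hx => (hHd x ⟨lt_trans ha.1 hx.1, hx.2⟩).hasDerivWithinAt) gII.neg
    rw [intervalIntegral.integral_neg, Hπ0] at this
    linarith
  -- final limit
  have T1 : Tendsto (fun a : ℝ => a / Real.sin a) (𝓝[>] (0:ℝ)) (𝓝 1) := by
    have h := hasDerivAt_iff_tendsto_slope.1 (Real.hasDerivAt_sin 0)
    rw [Real.cos_zero] at h
    have h' : Tendsto (fun a : ℝ => Real.sin a / a) (𝓝[≠] (0:ℝ)) (𝓝 1) := by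
      refine h.congr fun a => ?_
      rw [slope_def_field]
      simp
    have h'' : Tendsto (fun a : ℝ => Real.sin a / a) (𝓝[>] (0:ℝ)) (𝓝 1) :=
      h'.mono_left (nhdsWithin_mono 0 (fun x hx => ne_of_gt hx))
    have := h''.inv₀ one_ne_zero
    rw [inv_one] at this
    refine this.congr fun a => ?_
    rw [inv_div]
  have T1' : Tendsto (fun a : ℝ => (a / Real.sin a) ^ α) (𝓝[>] (0:ℝ)) (𝓝 1) := by
    have hc := (Real.continuousAt_rpow_const 1 α (Or.inl one_ne_zero)).tendsto.comp T1
    rw [Real.one_rpow] at hc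
    exact hc
  have Tcot : Tendsto (fun a : ℝ => -(Real.cos a / Real.sin a)) (𝓝[>] (0:ℝ)) atBot := by
    have hsin0 : Tendsto Real.sin (𝓝[>] (0:ℝ)) (𝓝[>] (0:ℝ)) := by
      rw [tendsto_nhdsWithin_iff]
      constructor
      · have := (Real.continuous_sin.tendsto 0).mono_left (nhdsWithin_le_nhds (s := Ioi (0:ℝ)))
        rwa [Real.sin_zero] at this
      · filter_upwards [Ioo_mem_nhdsGT_of_mem (show (0:ℝ) ∈ Ico (0:ℝ) π from ⟨le_rfl, hπ⟩)]
          with x hx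
        exact Real.sin_pos_of_pos_of_lt_pi hx.1 hx.2
    have hinv : Tendsto (fun a : ℝ => (Real.sin a)⁻¹) (𝓝[>] (0:ℝ)) atTop :=
      tendsto_inv_nhdsGT_zero.comp hsin0
    have hcos : Tendsto Real.cos (𝓝[>] (0:ℝ)) (𝓝 1) := by
      have := (Real.continuous_cos.tendsto 0).mono_left (nhdsWithin_le_nhds (s := Ioi (0:ℝ)))
      rwa [Real.cos_zero] at this
    have hdiv : Tendsto (fun a : ℝ => Real.cos a * (Real.sin a)⁻¹) (𝓝[>] (0:ℝ)) atTop :=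
      Filter.Tendsto.pos_mul_atTop one_pos hcos hinv
    have := tendsto_neg_atTop_atBot.comp hdiv
    refine this.congr fun a => ?_
    simp [div_eq_mul_inv]
  have T2 : Tendsto (fun a : ℝ => auxK p (-(Real.cos a / Real.sin a))) (𝓝[>] (0:ℝ))
      (𝓝 (∫ v : ℝ, (1 + v^2) ^ (-p))) := (aux_K_tendsto hp').comp Tcot
  have Tfin : Tendsto (fun a : ℝ => (a / Real.sin a) ^ α * auxK p (-(Real.cos a / Real.sin a)) / α)
      (𝓝[>] (0:ℝ)) (𝓝 (1 * (∫ v : ℝ, (1 + v^2) ^ (-p)) / α)) := (T1'.mul T2).div_const α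
  rw [one_mul, aux_I hp1, show p - 1/2 = (1+α)/2 by rw [hpdef]; ring] at Tfin
  have hfinal : Real.sqrt π * Real.Gamma ((1 + α) / 2) / Real.Gamma p / α
      = Real.sqrt π * Real.Gamma ((1 + α) / 2) / (α * Real.Gamma (1 + α / 2)) := by
    rw [hpdef, div_div]
    ring
  rw [hfinal] at Tfin
  refine Tendsto.congr' ?_ Tfin
  filter_upwards [Ioo_mem_nhdsGT_of_mem (show (0:ℝ) ∈ Ico (0:ℝ) π from ⟨le_rfl, hπ⟩)]
    with a ha
  have hsa : 0 < Real.sin a := Real.sin_pos_of_pos_of_lt_pi ha.1 ha.2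
  rw [key_eq a ha]
  simp only [hHdef]
  rw [Real.div_rpow ha.1.le hsa.le, Real.rpow_neg hsa.le]
  field_simp
end

section
/- Let α be a real number with 0 < α < 2 and let μ be a Borel probability measure on (0, ∞) such that ∫_{(0,∞)} exp(-λ·s) dμ(s) = exp(-λ^{α/2}) for all real λ ≥ 0. Then ∫_{(0,∞)} ( ∫_{ℝ²} |x|^{-α} · (4πs)^{-1} · exp(-|x|²/(4s)) dx ) dμ(s) = 2^{-α} · Γ(1 - α/2) / Γ(1 + α/2), where the inner integral is with respect to two-dimensional Lebesgue measure and Γ denotes the Gamma function. -/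
open MeasureTheory Real
open Set


lemma ball_vol : (MeasureTheory.volume (Metric.ball (0 : EuclideanSpace ℝ (Fin 2)) 1)).toReal = π := by
  rw [EuclideanSpace.volume_ball]
  simp [Real.sq_sqrt Real.pi_pos.le]
  rw [show (1:ℝ) + 1 = 2 by norm_num, Real.Gamma_two]
  simp [Real.pi_pos.le]

lemma inner_eq (α s : ℝ) (hα : 0 < α) (hα2 : α < 2) (hs : 0 < s) :
    ∫ x : EuclideanSpace ℝ (Fin 2),
        ‖x‖ ^ (-α) * ((4 * π * s)⁻¹ * Real.exp (-‖x‖ ^ 2 / (4 * s)))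
      = Real.Gamma (1 - α / 2) * (2 ^ (-α) * s ^ (-(α / 2))) := by
  have h := integral_fun_norm_addHaar (volume : Measure (EuclideanSpace ℝ (Fin 2)))
    (fun y : ℝ => y ^ (-α) * ((4 * π * s)⁻¹ * Real.exp (-y ^ 2 / (4 * s))))
  refine h.trans ?_
  simp only [finrank_euclideanSpace_fin, smul_eq_mul, nsmul_eq_mul, Nat.cast_ofNat,
    Nat.reduceSub, pow_one, measureReal_def, ball_vol]
  have h4s : (0:ℝ) < 4 * s := by linarith
  have key : ∫ (y : ℝ) in Set.Ioi 0, y * (y ^ (-α) * ((4 * π * s)⁻¹ * rexp (-y ^ 2 / (4 * s))))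
      = (4 * π * s)⁻¹ * (((4*s)⁻¹) ^ (-(1 - α + 1) / 2) * (1 / 2) * Real.Gamma ((1 - α + 1) / 2)) := by
    rw [← integral_rpow_mul_exp_neg_mul_rpow two_pos (by linarith : (-1:ℝ) < 1 - α)
      (by positivity : (0:ℝ) < (4*s)⁻¹), ← integral_const_mul]
    refine setIntegral_congr_fun measurableSet_Ioi (fun y hy => ?_)
    have hy0 : (0:ℝ) < y := hy
    rw [show (1 - α : ℝ) = 1 + -α by ring, rpow_add hy0, rpow_one]
    rw [show ((2:ℝ)) = ((2:ℕ):ℝ) by norm_num, Real.rpow_natCast]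
    rw [show rexp (-y ^ (2:ℕ) / (4 * s)) = rexp (-(4*s)⁻¹ * y ^ (2:ℕ)) by ring_nf]
    ring
  rw [key]
  -- now pure arithmetic with rpow
  have e1 : ((4*s)⁻¹ : ℝ) ^ (-(1 - α + 1) / 2) = (4*s) ^ ((2 - α)/2) := by
    rw [inv_rpow h4s.le, ← rpow_neg h4s.le]
    congr 1; ring
  have e2 : ((4:ℝ)*s) ^ ((2 - α)/2) = (4*s) * ((4:ℝ)) ^ (-(α/2)) * s ^ (-(α/2)) := by
    rw [show ((2 - α)/2 : ℝ) = 1 + -(α/2) by ring, rpow_add h4s, rpow_one,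
      mul_rpow (by norm_num : (0:ℝ) ≤ 4) hs.le]
    ring
  have e3 : ((4:ℝ)) ^ (-(α/2)) = 2 ^ (-α) := by
    rw [show (4:ℝ) = 2 ^ (2:ℕ) by norm_num, ← Real.rpow_natCast 2 2, ← Real.rpow_mul (by norm_num)]
    congr 1; push_cast; ring
  rw [e1, e2, e3, show (1 - α + 1)/2 = 1 - α/2 by ring]
  have hπ : π ≠ 0 := Real.pi_ne_zero
  field_simp


lemma momentB (β : ℝ) (hβ0 : 0 < β) (hβ1 : β < 1) (μ : Measure ℝ) [IsProbabilityMeasure μ]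
    (hLap : ∀ l : ℝ, 0 ≤ l →
      ∫ s in Set.Ioi (0 : ℝ), Real.exp (-(l * s)) ∂μ = Real.exp (-(l ^ β))) :
    ∫ s in Set.Ioi (0 : ℝ), s ^ (-β) ∂μ = 1 / Real.Gamma (β + 1) := by
  have hΓ : 0 < Real.Gamma β := Real.Gamma_pos_of_pos hβ0
  -- pointwise Gamma identity
  have key : ∀ s : ℝ, 0 < s →
      ∫ l in Ioi (0:ℝ), l ^ (β - 1) * Real.exp (-(l * s)) = Real.Gamma β * s ^ (-β) := by
    intro s hs
    have := Real.integral_rpow_mul_exp_neg_mul_Ioi hβ0 hs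
    simp_rw [mul_comm s _] at this
    rw [this, one_div, inv_rpow hs.le, ← rpow_neg hs.le, mul_comm]
  -- integrability in l for fixed s > 0
  have ints : ∀ s : ℝ, 0 < s →
      IntegrableOn (fun l : ℝ => l ^ (β - 1) * Real.exp (-(l * s))) (Ioi 0) := by
    intro s hs
    have h := integrableOn_rpow_mul_exp_neg_mul_rpow (p := 1) (s := β - 1) (b := s)
      (by linarith) one_pos hs
    refine h.congr_fun (fun l hl => ?_) measurableSet_Ioi
    simp only [rpow_one]; ring_nf
  have hmeas : Measurable (fun p : ℝ × ℝ =>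
      ENNReal.ofReal (p.2 ^ (β - 1) * Real.exp (-(p.2 * p.1)))) := by
    apply Measurable.ennreal_ofReal
    exact ((measurable_snd.pow_const _).mul ((measurable_snd.mul measurable_fst).neg.exp))
  have swap := lintegral_lintegral_swap (μ := μ.restrict (Set.Ioi 0))
    (ν := volume.restrict (Set.Ioi 0))
    (f := fun s l => ENNReal.ofReal (l ^ (β - 1) * Real.exp (-(l * s))))
    hmeas.aemeasurable
  -- LHS of swap equals ∫⁻ ofReal (Γβ * s^(-β)) ∂μ
  have lhs_eq : ∫⁻ s in Ioi (0:ℝ), (∫⁻ l in Ioi (0:ℝ),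
        ENNReal.ofReal (l ^ (β - 1) * Real.exp (-(l * s)))) ∂μ
      = ∫⁻ s in Ioi (0:ℝ), ENNReal.ofReal (Real.Gamma β * s ^ (-β)) ∂μ := by
    refine lintegral_congr_ae ?_
    filter_upwards [ae_restrict_mem measurableSet_Ioi] with s hs
    rw [← key s hs, ← ofReal_integral_eq_lintegral_ofReal (ints s hs) ?_]
    filter_upwards [ae_restrict_mem measurableSet_Ioi] with l hl
    have hl0 : (0:ℝ) < l := hl
    positivity
  -- RHS of swap: inner μ-integral
  have rhs_eq : ∫⁻ l in Ioi (0:ℝ), (∫⁻ s in Ioi (0:ℝ),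
        ENNReal.ofReal (l ^ (β - 1) * Real.exp (-(l * s))) ∂μ)
      = ∫⁻ l in Ioi (0:ℝ), ENNReal.ofReal (l ^ (β - 1) * Real.exp (-(l ^ β))) := by
    refine lintegral_congr_ae ?_
    filter_upwards [ae_restrict_mem measurableSet_Ioi] with l hl
    have hl0 : (0:ℝ) < l := hl
    have hgm : Measurable fun s : ℝ => l ^ (β - 1) * Real.exp (-(l * s)) :=
      measurable_const.mul (((measurable_id.const_mul l).neg).exp)
    have hgi : Integrable (fun s : ℝ => l ^ (β - 1) * Real.exp (-(l * s)))
        (μ.restrict (Ioi 0)) := by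
      refine Integrable.mono' (integrable_const (l ^ (β - 1)))
        hgm.aestronglyMeasurable ?_
      filter_upwards [ae_restrict_mem measurableSet_Ioi] with s hs
      have hs0 : (0:ℝ) < s := hs
      rw [Real.norm_eq_abs, abs_mul, abs_of_nonneg (rpow_nonneg hl0.le _),
        abs_of_nonneg (Real.exp_pos _).le]
      refine mul_le_of_le_one_right (rpow_nonneg hl0.le _) ?_
      rw [Real.exp_le_one_iff]
      nlinarith
    rw [← ofReal_integral_eq_lintegral_ofReal hgi ?_, integral_const_mul, hLap l hl0.le]
    filter_upwards [ae_restrict_mem measurableSet_Ioi] with s hs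
    positivity
  -- value of the λ-integral
  have hIval : ∫ l in Ioi (0:ℝ), l ^ (β - 1) * Real.exp (-(l ^ β)) = 1 / β := by
    have := integral_rpow_mul_exp_neg_rpow hβ0 (by linarith : (-1:ℝ) < β - 1)
    rw [show (β - 1 + 1)/β = 1 by field_simp; ring] at this
    rw [this, Real.Gamma_one, mul_one]
  have hIint : IntegrableOn (fun l : ℝ => l ^ (β - 1) * Real.exp (-(l ^ β))) (Ioi 0) := by
    have := (integrableOn_Ioi_comp_rpow_iff' (fun y : ℝ => Real.exp (-y)) hβ0.ne').mpr ?_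
    · refine this.congr_fun (fun l hl => ?_) measurableSet_Ioi
      simp [smul_eq_mul]
    · have h := exp_neg_integrableOn_Ioi (0:ℝ) one_pos
      refine h.congr_fun (fun y hy => ?_) measurableSet_Ioi
      norm_num
  have rhs_val : ∫⁻ l in Ioi (0:ℝ), ENNReal.ofReal (l ^ (β - 1) * Real.exp (-(l ^ β)))
      = ENNReal.ofReal (1 / β) := by
    rw [← hIval, ← ofReal_integral_eq_lintegral_ofReal hIint ?_]
    filter_upwards [ae_restrict_mem measurableSet_Ioi] with l hl
    have hl0 : (0:ℝ) < l := hl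
    positivity
  -- combine
  set L := ∫⁻ s in Ioi (0:ℝ), ENNReal.ofReal (s ^ (-β)) ∂μ with hL
  have hmul : ∫⁻ s in Ioi (0:ℝ), ENNReal.ofReal (Real.Gamma β * s ^ (-β)) ∂μ
      = ENNReal.ofReal (Real.Gamma β) * L := by
    simp_rw [ENNReal.ofReal_mul hΓ.le]
    have hm : Measurable fun s : ℝ => s ^ (-β) := measurable_id.pow_const _
    rw [hL, lintegral_const_mul _ hm.ennreal_ofReal]
  have hΓL : ENNReal.ofReal (Real.Gamma β) * L = ENNReal.ofReal (1 / β) := by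
    rw [← hmul, ← lhs_eq, swap, rhs_eq, rhs_val]
  have hLne : L ≠ ⊤ := by
    intro h
    rw [h, ENNReal.mul_top (ENNReal.ofReal_pos.mpr hΓ).ne'] at hΓL
    exact ENNReal.ofReal_ne_top hΓL.symm
  have hX : Real.Gamma β * L.toReal = 1 / β := by
    have := congrArg ENNReal.toReal hΓL
    rwa [ENNReal.toReal_mul, ENNReal.toReal_ofReal hΓ.le,
      ENNReal.toReal_ofReal (by positivity)] at this
  have hint : ∫ s in Ioi (0:ℝ), s ^ (-β) ∂μ = L.toReal := by
    have hm : Measurable fun s : ℝ => s ^ (-β) := measurable_id.pow_const _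
    rw [integral_eq_lintegral_of_nonneg_ae ?_ hm.aestronglyMeasurable]
    filter_upwards [ae_restrict_mem measurableSet_Ioi] with s hs
    exact rpow_nonneg (le_of_lt hs) _
  rw [eq_div_iff hβ0.ne'] at hX
  rw [hint, Real.Gamma_add_one hβ0.ne', eq_div_iff (by positivity)]
  linear_combination hX

/-- If `μ` is a Borel probability measure on `(0,∞)` with Laplace transform
`λ ↦ exp(-λ^(α/2))`, `0 < α < 2`, then
`∫_{(0,∞)} (∫_{ℝ²} |x|^(-α) (4πs)^(-1) exp(-|x|²/(4s)) dx) dμ(s)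
  = 2^(-α) Γ(1-α/2) / Γ(1+α/2)`. -/
theorem stmt7 (α : ℝ) (hα : 0 < α) (hα2 : α < 2)
    (μ : Measure ℝ) [IsProbabilityMeasure μ] (hsupp : μ (Set.Iic 0) = 0)
    (hLap : ∀ l : ℝ, 0 ≤ l →
      ∫ s in Set.Ioi (0 : ℝ), Real.exp (-(l * s)) ∂μ = Real.exp (-(l ^ (α / 2)))) :
    ∫ s in Set.Ioi (0 : ℝ),
        (∫ x : EuclideanSpace ℝ (Fin 2),
          ‖x‖ ^ (-α) * ((4 * π * s)⁻¹ * Real.exp (-‖x‖ ^ 2 / (4 * s)))) ∂μ =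
      2 ^ (-α) * Real.Gamma (1 - α / 2) / Real.Gamma (1 + α / 2) := by
  have h1 : ∫ s in Set.Ioi (0 : ℝ),
        (∫ x : EuclideanSpace ℝ (Fin 2),
          ‖x‖ ^ (-α) * ((4 * π * s)⁻¹ * Real.exp (-‖x‖ ^ 2 / (4 * s)))) ∂μ
      = ∫ s in Set.Ioi (0 : ℝ),
          Real.Gamma (1 - α / 2) * (2 ^ (-α) * s ^ (-(α / 2))) ∂μ := by
    refine setIntegral_congr_fun measurableSet_Ioi (fun s hs => ?_)
    exact inner_eq α s hα hα2 hs
  rw [h1]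
  simp_rw [← mul_assoc, integral_const_mul]
  rw [momentB (α / 2) (by linarith) (by linarith) μ hLap,
    show (1 : ℝ) + α / 2 = α / 2 + 1 by ring]
  ring
end
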